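/- arXiv:1812.01310 — 10 statements merged into one kernel-verified Lean document; each statement's English description precedes it below -/
import Mathlib

section
/- Let M be an m×n integer matrix, let c ∈ ℝ^m have all entries nonzero, let k ∈ ℝ, and let δ ∈ {0,1}^n. Then the following are equivalent. (a) There exists g ∈ ℝ^n with all entries nonzero and sign(g_j) = (−1)^{δ_j} for every j, such that the vector X ∈ ℝ^m with entries X_a = c_a² · ∏_{j=1}^n g_j^{M_{aj}} satisfies Mᵀ X = (k, …, k). (b) There exists X ∈ ℝ^m such that: (K) Mᵀ X = (k, …, k); (H) every entry of X is nonzero; (L) sign(X_a) = (−1)^{Σ_j M_{aj} δ_j} for every a; (P) for every α ∈ ℝ^m with Mᵀ α = 0, ∏_a |X_a|^{α_a} = ∏_a |c_a|^{2 α_a}. -/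
open scoped RealInnerProductSpace

lemma aux_exists_solution (m n : ℕ) (A : Matrix (Fin m) (Fin n) ℝ) (y : Fin m → ℝ)
    (h : ∀ α : Fin m → ℝ, (∀ j, ∑ a, A a j * α a = 0) → ∑ a, α a * y a = 0) :
    ∃ t : Fin n → ℝ, ∀ a, ∑ j, A a j * t j = y a := by
  set L := Matrix.toEuclideanLin A with hL
  set U := LinearMap.range L with hU
  have hy : (WithLp.toLp 2 y : EuclideanSpace ℝ (Fin m)) ∈ Uᗮᗮ := by
    intro α hα
    have h1 : ∀ j, ∑ a, A a j * α a = 0 := by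
      intro j
      have := hα (L (EuclideanSpace.single j 1)) ⟨_, rfl⟩
      simp only [hL, Matrix.toEuclideanLin_apply, Matrix.mulVec, dotProduct,
        PiLp.inner_apply, RCLike.inner_apply, conj_trivial, PiLp.toLp_apply,
        EuclideanSpace.single_apply] at this
      simpa [Finset.mul_sum, mul_comm] using this
    have := h α h1
    simpa [PiLp.inner_apply, mul_comm] using this
  rw [Submodule.orthogonal_orthogonal] at hy
  obtain ⟨t, ht⟩ := hy
  refine ⟨t, fun a => ?_⟩
  have := congrFun (congrArg (fun v : EuclideanSpace ℝ (Fin m) => (v : Fin m → ℝ)) ht) a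
  simpa [hL, Matrix.toEuclideanLin_apply, Matrix.mulVec, dotProduct] using this

lemma aux_zpow_sum {ι : Type*} {x : ℝ} (hx : x ≠ 0) (s : Finset ι) (f : ι → ℤ) :
    x ^ (∑ i ∈ s, f i) = ∏ i ∈ s, x ^ f i := by
  classical
  induction s using Finset.cons_induction with
  | empty => simp
  | cons a s ha ih => rw [Finset.sum_cons, Finset.prod_cons, zpow_add₀ hx, ih]

lemma aux_sign {z : ℤ} {r : ℝ} (hr : 0 < r) :
    Real.sign ((-1 : ℝ) ^ z * r) = (-1 : ℝ) ^ z := by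
  rcases Int.even_or_odd z with h | h
  · rw [h.neg_one_zpow, one_mul, Real.sign_of_pos hr]
  · rw [h.neg_one_zpow, neg_one_mul, Real.sign_of_neg (by linarith)]

lemma aux_sign_mul_abs (x : ℝ) : Real.sign x * |x| = x := by
  rcases lt_trichotomy x 0 with h | h | h
  · rw [Real.sign_of_neg h, abs_of_neg h]; ring
  · simp [h]
  · rw [Real.sign_of_pos h, abs_of_pos h]; ring

lemma aux_exp_zpow (t : ℝ) (z : ℤ) : Real.exp t ^ z = Real.exp ((z : ℝ) * t) := by
  rw [← Real.rpow_intCast (Real.exp t) z, Real.rpow_def_of_pos (Real.exp_pos t),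
    Real.log_exp, mul_comm]

/-- Criterion for existence of a diagonal Einstein metric on a nice nilpotent Lie algebra,
in terms of the root matrix `M`, structure constants `c`, cosmological constant `k` and
signature `δ`. -/
theorem diagonal_einstein_criterion (m n : ℕ) (M : Matrix (Fin m) (Fin n) ℤ)
    (c : Fin m → ℝ) (hc : ∀ a, c a ≠ 0) (k : ℝ)
    (δ : Fin n → ℤ) (hδ : ∀ j, δ j = 0 ∨ δ j = 1) :
    (∃ g : Fin n → ℝ, (∀ j, g j ≠ 0) ∧
        (∀ j, Real.sign (g j) = (-1 : ℝ) ^ δ j) ∧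
        (∀ j', ∑ a, (M a j' : ℝ) * (c a ^ 2 * ∏ j, g j ^ M a j) = k)) ↔
      (∃ X : Fin m → ℝ,
        (∀ j, ∑ a, (M a j : ℝ) * X a = k) ∧
        (∀ a, X a ≠ 0) ∧
        (∀ a, Real.sign (X a) = (-1 : ℝ) ^ (∑ j, M a j * δ j)) ∧
        (∀ α : Fin m → ℝ, (∀ j, ∑ a, (M a j : ℝ) * α a = 0) →
          ∏ a, |X a| ^ α a = ∏ a, |c a| ^ (2 * α a))) := by
  have hcsq : ∀ a, (0:ℝ) < c a ^ 2 :=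
    fun a => lt_of_le_of_ne (sq_nonneg _) (Ne.symm (pow_ne_zero 2 (hc a)))
  have habs1 : ∀ z : ℤ, |(-1:ℝ) ^ z| = 1 := by
    intro z
    rcases Int.even_or_odd z with h | h
    · rw [h.neg_one_zpow, abs_one]
    · rw [h.neg_one_zpow, abs_neg, abs_one]
  constructor
  · rintro ⟨g, hg0, hgs, hK⟩
    set X : Fin m → ℝ := fun a => c a ^ 2 * ∏ j, g j ^ M a j with hX
    have hgabs : ∀ j, (0:ℝ) < |g j| := fun j => abs_pos.mpr (hg0 j)
    have hPpos : ∀ a, (0:ℝ) < ∏ j, |g j| ^ M a j :=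
      fun a => Finset.prod_pos fun j _ => zpow_pos (hgabs j) _
    -- decomposition of X
    have hF : ∀ a, X a = (-1:ℝ) ^ (∑ j, M a j * δ j) * (c a ^ 2 * ∏ j, |g j| ^ M a j) := by
      intro a
      have hgd : ∀ j, g j = (-1:ℝ) ^ δ j * |g j| := by
        intro j
        conv_lhs => rw [← aux_sign_mul_abs (g j), hgs j]
      have : ∏ j, g j ^ M a j
          = (∏ j, ((-1:ℝ) ^ δ j) ^ M a j) * ∏ j, |g j| ^ M a j := by
        rw [← Finset.prod_mul_distrib]
        exact Finset.prod_congr rfl fun j _ => by rw [← mul_zpow, ← hgd j]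
      rw [hX]
      simp only [this]
      have h2 : (∏ j, ((-1:ℝ) ^ δ j) ^ M a j) = (-1:ℝ) ^ (∑ j, M a j * δ j) := by
        rw [aux_zpow_sum (by norm_num : (-1:ℝ) ≠ 0)]
        exact Finset.prod_congr rfl fun j _ => by
          rw [← zpow_mul, mul_comm (M a j)]
      rw [h2]; ring
    have hXabs : ∀ a, |X a| = c a ^ 2 * ∏ j, |g j| ^ M a j := by
      intro a
      rw [hF a, abs_mul, habs1, one_mul, abs_of_pos (mul_pos (hcsq a) (hPpos a))]
    have hXne : ∀ a, X a ≠ 0 := by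
      intro a
      rw [hF a]
      exact mul_ne_zero (zpow_ne_zero _ (by norm_num)) (mul_pos (hcsq a) (hPpos a)).ne'
    refine ⟨X, hK, hXne, ?_, ?_⟩
    · intro a
      rw [hF a]
      exact aux_sign (mul_pos (hcsq a) (hPpos a))
    · intro α hα
      have hlhs_pos : (0:ℝ) < ∏ a, |X a| ^ α a :=
        Finset.prod_pos fun a _ => Real.rpow_pos_of_pos (abs_pos.mpr (hXne a)) _
      have hrhs_pos : (0:ℝ) < ∏ a, |c a| ^ (2 * α a) :=
        Finset.prod_pos fun a _ => Real.rpow_pos_of_pos (abs_pos.mpr (hc a)) _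
      have hlog : Real.log (∏ a, |X a| ^ α a) = Real.log (∏ a, |c a| ^ (2 * α a)) := by
        rw [Real.log_prod (fun a _ => (Real.rpow_pos_of_pos (abs_pos.mpr (hXne a)) _).ne'),
          Real.log_prod (fun a _ => (Real.rpow_pos_of_pos (abs_pos.mpr (hc a)) _).ne')]
        have hXlog : ∀ a, Real.log |X a|
            = 2 * Real.log |c a| + ∑ j, (M a j : ℝ) * Real.log |g j| := by
          intro a
          rw [hXabs a, Real.log_mul (hcsq a).ne' (hPpos a).ne',
            Real.log_prod (fun j _ => (zpow_pos (hgabs j) _).ne'), ← sq_abs,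
            Real.log_pow]
          push_cast
          congr 1
          exact Finset.sum_congr rfl fun j _ => by rw [Real.log_zpow]
        calc ∑ a, Real.log (|X a| ^ α a)
            = ∑ a, α a * (2 * Real.log |c a| + ∑ j, (M a j : ℝ) * Real.log |g j|) := by
              exact Finset.sum_congr rfl fun a _ => by
                rw [Real.log_rpow (abs_pos.mpr (hXne a)), hXlog a]
          _ = (∑ a, 2 * α a * Real.log |c a|)
              + ∑ a, ∑ j, (M a j : ℝ) * α a * Real.log |g j| := by
              rw [← Finset.sum_add_distrib]
              refine Finset.sum_congr rfl fun a _ => ?_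
              rw [mul_add, Finset.mul_sum]
              congr 1
              · ring
              · exact Finset.sum_congr rfl fun j _ => by ring
          _ = (∑ a, 2 * α a * Real.log |c a|)
              + ∑ j, (∑ a, (M a j : ℝ) * α a) * Real.log |g j| := by
              congr 1
              rw [Finset.sum_comm]
              exact Finset.sum_congr rfl fun j _ => by rw [Finset.sum_mul]
          _ = ∑ a, 2 * α a * Real.log |c a| := by
              simp [hα]
          _ = ∑ a, Real.log (|c a| ^ (2 * α a)) := by
              exact Finset.sum_congr rfl fun a _ => by
                rw [Real.log_rpow (abs_pos.mpr (hc a))]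
      have := congrArg Real.exp hlog
      rwa [Real.exp_log hlhs_pos, Real.exp_log hrhs_pos] at this
  · rintro ⟨X, hK, hH, hL, hP⟩
    have hXabs_pos : ∀ a, (0:ℝ) < |X a| / c a ^ 2 :=
      fun a => div_pos (abs_pos.mpr (hH a)) (hcsq a)
    have hortho : ∀ α : Fin m → ℝ, (∀ j, ∑ a, (M a j : ℝ) * α a = 0) →
        ∑ a, α a * Real.log (|X a| / c a ^ 2) = 0 := by
      intro α hα
      have h1 := hP α hα
      have hXa : ∀ a, (0:ℝ) < |X a| := fun a => abs_pos.mpr (hH a)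
      have hca : ∀ a, (0:ℝ) < |c a| := fun a => abs_pos.mpr (hc a)
      have hlog := congrArg Real.log h1
      rw [Real.log_prod (fun a _ => (Real.rpow_pos_of_pos (hXa a) _).ne'),
        Real.log_prod (fun a _ => (Real.rpow_pos_of_pos (hca a) _).ne')] at hlog
      simp only [Real.log_rpow (hXa _), Real.log_rpow (hca _)] at hlog
      have : ∀ a, Real.log (|X a| / c a ^ 2) = Real.log |X a| - 2 * Real.log |c a| := by
        intro a
        rw [Real.log_div (hXa a).ne' (hcsq a).ne', ← sq_abs, Real.log_pow]
        push_cast; ring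
      calc ∑ a, α a * Real.log (|X a| / c a ^ 2)
          = ∑ a, (α a * Real.log |X a| - 2 * α a * Real.log |c a|) := by
            exact Finset.sum_congr rfl fun a _ => by rw [this a]; ring
        _ = (∑ a, α a * Real.log |X a|) - ∑ a, 2 * α a * Real.log |c a| := by
            rw [Finset.sum_sub_distrib]
        _ = 0 := by
            rw [hlog, sub_eq_zero]
    obtain ⟨t, ht⟩ := aux_exists_solution m n (fun a j => (M a j : ℝ))
      (fun a => Real.log (|X a| / c a ^ 2)) hortho
    refine ⟨fun j => (-1:ℝ) ^ δ j * Real.exp (t j), ?_, ?_, ?_⟩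
    · intro j
      exact mul_ne_zero (zpow_ne_zero _ (by norm_num)) (Real.exp_ne_zero _)
    · intro j
      exact aux_sign (Real.exp_pos _)
    · intro j'
      have key : ∀ a, c a ^ 2 * ∏ j, ((-1:ℝ) ^ δ j * Real.exp (t j)) ^ M a j = X a := by
        intro a
        have h1 : ∏ j, ((-1:ℝ) ^ δ j * Real.exp (t j)) ^ M a j
            = (-1:ℝ) ^ (∑ j, M a j * δ j) * Real.exp (∑ j, (M a j : ℝ) * t j) := by
          rw [Finset.prod_congr rfl (fun j _ => mul_zpow ((-1:ℝ) ^ δ j) (Real.exp (t j)) (M a j)),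
            Finset.prod_mul_distrib]
          congr 1
          · rw [aux_zpow_sum (by norm_num : (-1:ℝ) ≠ 0)]
            exact Finset.prod_congr rfl fun j _ => by rw [← zpow_mul, mul_comm (M a j)]
          · rw [Real.exp_sum]
            exact Finset.prod_congr rfl fun j _ => aux_exp_zpow _ _
        rw [h1, ht a, Real.exp_log (hXabs_pos a), ← hL a]
        rw [show c a ^ 2 * (Real.sign (X a) * (|X a| / c a ^ 2))
            = Real.sign (X a) * |X a| from by
              rw [mul_left_comm, mul_comm (c a ^ 2), div_mul_cancel₀ _ (hcsq a).ne'],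
          aux_sign_mul_abs]
      calc ∑ a, (M a j' : ℝ) * (c a ^ 2 * ∏ j, ((-1:ℝ) ^ δ j * Real.exp (t j)) ^ M a j)
          = ∑ a, (M a j' : ℝ) * X a :=
            Finset.sum_congr rfl fun a _ => by rw [key a]
        _ = k := hK j'
end

section
/- Let 𝔤 be a real nilpotent Lie algebra with a nice basis (e_1,…,e_n), and for each pair i ≠ j with [e_i,e_j] ≠ 0 write [e_i,e_j] = c_{ij}·e_{d(i,j)} with c_{ij} ≠ 0. Let g_1,…,g_n be nonzero real numbers and let ⟨·,·⟩ be the diagonal metric with ⟨e_i,e_i⟩ = g_i and ⟨e_i,e_j⟩ = 0 for i ≠ j. Then the Ricci tensor of ⟨·,·⟩ is diagonal in this basis: ric(e_k,e_l) = 0 for all k ≠ l, and for every k, ric(e_k,e_k) = (1/2)·Σ_{i<j, d(i,j)=k} c_{ij}² · g_k² / (g_i g_j) − (1/2)·Σ_{i: [e_k,e_i]≠0} c_{ki}² · g_{d(k,i)} / g_i. -/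
open Classical

/-- A basis of a real Lie algebra is nice if every bracket of two basis vectors is a
multiple of a basis vector, and for all `i, k` there is at most one `j` such that the
coefficient of `e k` in `⁅e i, e j⁆` is nonzero. -/
def IsNiceBasis {L : Type} [LieRing L] [LieAlgebra ℝ L] {ι : Type}
    (e : Module.Basis ι ℝ L) : Prop :=
  (∀ i j, ∃ (k : ι) (a : ℝ), ⁅e i, e j⁆ = a • e k) ∧
  (∀ i k j j', e.repr ⁅e i, e j⁆ k ≠ 0 → e.repr ⁅e i, e j'⁆ k ≠ 0 → j = j')

/-- The expression for the Ricci tensor of a metric `B` on a nilpotent Lie algebra,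
computed from a basis `v` with metric-dual family `u`. -/
noncomputable def ricci {L : Type} [LieRing L] [LieAlgebra ℝ L] {ι : Type} [Fintype ι]
    (B : LinearMap.BilinForm ℝ L) (v u : ι → L) (x y : L) : ℝ :=
  -(1 / 2 : ℝ) * ∑ i, B ⁅x, v i⁆ ⁅y, u i⁆
    + (1 / 4 : ℝ) * ∑ i, ∑ j, B ⁅v i, v j⁆ x * B ⁅u i, u j⁆ y

/-- `u` is the metric-dual family of `v` with respect to `B`: `B (v i) (u j) = δ_ij`. -/
def IsDualPair {L : Type} [LieRing L] [LieAlgebra ℝ L] {ι : Type} [Fintype ι]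
    (B : LinearMap.BilinForm ℝ L) (v u : ι → L) : Prop :=
  ∀ i j, B (v i) (u j) = if i = j then (1 : ℝ) else 0

section Aux

variable {L : Type} [LieRing L] [LieAlgebra ℝ L]

lemma bilin_sum_sum {ι κ : Type} [Fintype ι] [Fintype κ]
    (F : L →ₗ[ℝ] L →ₗ[ℝ] ℝ) (a : ι → ℝ) (b : κ → ℝ) (w : ι → L) (w' : κ → L) :
    F (∑ k, a k • w k) (∑ l, b l • w' l)
      = ∑ k, ∑ l, a k * b l * F (w k) (w' l) := by
  simp only [map_sum, map_smul, LinearMap.sum_apply, LinearMap.smul_apply, smul_eq_mul,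
    Finset.mul_sum]
  rw [Finset.sum_comm]
  exact Finset.sum_congr rfl fun k _ => Finset.sum_congr rfl fun l _ => by ring

lemma expand_dual {ι : Type} [Fintype ι] (B : LinearMap.BilinForm ℝ L)
    (w : Module.Basis ι ℝ L) (z : ι → L) (h : IsDualPair B (⇑w) z) (x : L) :
    ∑ i, B x (z i) • w i = x := by
  have hd : ∀ i j, B (w i) (z j) = if i = j then (1:ℝ) else 0 := h
  have hc : ∀ i, B x (z i) = w.repr x i := by
    intro i
    conv_lhs => rw [← w.sum_repr x]
    rw [map_sum, LinearMap.sum_apply]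
    simp [hd, Finset.sum_ite_eq', smul_eq_mul]
  simp only [hc]
  exact w.sum_repr x

lemma trace_indep {ι κ : Type} [Fintype ι] [Fintype κ]
    (B : LinearMap.BilinForm ℝ L) (hs : ∀ a b, B a b = B b a)
    (v : Module.Basis ι ℝ L) (u : ι → L) (hvu : IsDualPair B (⇑v) u)
    (w : Module.Basis κ ℝ L) (z : κ → L) (hwz : IsDualPair B (⇑w) z)
    (F : L →ₗ[ℝ] L →ₗ[ℝ] ℝ) :
    ∑ i, F (v i) (u i) = ∑ k, ∑ l, B (z k) (z l) * F (w k) (w l) := by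
  have key : ∀ i, F (v i) (u i)
      = ∑ k, ∑ l, B (v i) (z k) * B (u i) (z l) * F (w k) (w l) := by
    intro i
    conv_lhs => rw [← expand_dual B w z hwz (v i), ← expand_dual B w z hwz (u i)]
    exact bilin_sum_sum F _ _ _ _
  simp only [key]
  rw [Finset.sum_comm]
  refine Finset.sum_congr rfl fun k _ => ?_
  rw [Finset.sum_comm]
  refine Finset.sum_congr rfl fun l _ => ?_
  rw [← Finset.sum_mul]
  congr 1
  conv_rhs => rw [show (z l) = ∑ i, B (z l) (u i) • v i from (expand_dual B v u hvu (z l)).symm]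
  rw [map_sum]
  refine Finset.sum_congr rfl fun i _ => ?_
  rw [map_smul, smul_eq_mul, hs (z l) (u i), hs (z k) (v i), mul_comm]

noncomputable def pairF (f h : L →ₗ[ℝ] ℝ) : L →ₗ[ℝ] L →ₗ[ℝ] ℝ :=
  (LinearMap.mul ℝ ℝ).compl₁₂ f h

@[simp] lemma pairF_apply (f h : L →ₗ[ℝ] ℝ) (a b : L) : pairF f h a b = f a * h b := rfl

lemma double_sum_symm {n : ℕ} (F : Fin n → Fin n → ℝ) (hsym : ∀ i j, F j i = F i j)
    (hdiag : ∀ i, F i i = 0) :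
    ∑ i, ∑ j, F i j = 2 * ∑ i, ∑ j, (if i < j then F i j else 0) := by
  have hsplit : ∀ i j : Fin n, F i j
      = (if i < j then F i j else 0) + (if j < i then F i j else 0) := by
    intro i j
    rcases lt_trichotomy i j with h | rfl | h
    · simp [h, asymm h]
    · simp [hdiag]
    · simp [h, asymm h]
  have h2 : ∑ i, ∑ j, (if j < i then F i j else 0)
      = ∑ i, ∑ j, (if i < j then F i j else 0) := by
    rw [Finset.sum_comm]
    refine Finset.sum_congr rfl fun i _ => Finset.sum_congr rfl fun j _ => ?_
    rw [hsym]
  calc ∑ i, ∑ j, F i j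
      = ∑ i, ∑ j, ((if i < j then F i j else 0) + (if j < i then F i j else 0)) :=
        Finset.sum_congr rfl fun i _ => Finset.sum_congr rfl fun j _ => hsplit i j
    _ = ∑ i, ∑ j, (if i < j then F i j else 0) + ∑ i, ∑ j, (if j < i then F i j else 0) := by
        rw [← Finset.sum_add_distrib]
        exact Finset.sum_congr rfl fun i _ => Finset.sum_add_distrib
    _ = 2 * ∑ i, ∑ j, (if i < j then F i j else 0) := by rw [h2]; ring

end Aux

/-- The Ricci tensor of a diagonal metric on a nice nilpotent Lie algebra is diagonal,
with explicit diagonal entries. -/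
theorem ricci_diagonal_metric_nice {L : Type} [LieRing L] [LieAlgebra ℝ L]
    [LieRing.IsNilpotent L] {n : ℕ}
    (e : Module.Basis (Fin n) ℝ L) (he : IsNiceBasis e)
    (c : Fin n → Fin n → ℝ) (d : Fin n → Fin n → Fin n)
    (hcd : ∀ i j, i ≠ j → ⁅e i, e j⁆ ≠ 0 →
      ⁅e i, e j⁆ = c i j • e (d i j) ∧ c i j ≠ 0)
    (g : Fin n → ℝ) (hg : ∀ i, g i ≠ 0)
    (B : LinearMap.BilinForm ℝ L)
    (hB : ∀ i j, B (e i) (e j) = if i = j then g i else 0) :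
    ∀ (ι : Type) [Fintype ι] (v : Module.Basis ι ℝ L) (u : ι → L),
      IsDualPair B (⇑v) u →
        (∀ k l, k ≠ l → ricci B (⇑v) u (e k) (e l) = 0) ∧
        (∀ k, ricci B (⇑v) u (e k) (e k) =
          (1 / 2 : ℝ) * (∑ i : Fin n, ∑ j : Fin n,
              if i < j ∧ d i j = k ∧ ⁅e i, e j⁆ ≠ 0 then
                c i j ^ 2 * g k ^ 2 / (g i * g j) else 0)
            - (1 / 2 : ℝ) * ∑ i : Fin n,
              if ⁅e (k : Fin n), e i⁆ ≠ 0 then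
                c k i ^ 2 * g (d k i) / g i else 0) := by
  intro ι _ v u hvu
  -- symmetry of B
  have hflip : B = B.flip := by
    refine e.ext fun i => ?_
    refine e.ext fun j => ?_
    have h0 : (B.flip (e i)) (e j) = B (e j) (e i) := rfl
    rw [h0, hB, hB]
    rcases eq_or_ne i j with rfl | h
    · rfl
    · rw [if_neg h, if_neg (Ne.symm h)]
  have hs : ∀ a b, B a b = B b a := by
    intro a b
    conv_lhs => rw [hflip]
    rfl
  -- the dual family of e
  set u0 : Fin n → L := fun i => (g i)⁻¹ • e i with hu0def
  have hu0 : IsDualPair B e u0 := by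
    intro i j
    simp only [hu0def, map_smul, smul_eq_mul, hB]
    rcases eq_or_ne i j with rfl | h
    · simp [inv_mul_cancel₀ (hg i)]
    · simp [h]
  have hsum : ∀ F : L →ₗ[ℝ] L →ₗ[ℝ] ℝ,
      ∑ i, F (v i) (u i) = ∑ k, (g k)⁻¹ * F (e k) (e k) := by
    intro F
    rw [trace_indep B hs v u hvu e u0 hu0 F]
    refine Finset.sum_congr rfl fun k _ => ?_
    have hB00 : ∀ l, B (u0 k) (u0 l) = if k = l then (g k)⁻¹ else 0 := by
      intro l
      have h1 : B (u0 k) (u0 l) = (g k)⁻¹ * ((g l)⁻¹ * B (e k) (e l)) := by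
        simp only [hu0def, map_smul, LinearMap.smul_apply, smul_eq_mul]
        ring
      rw [h1, hB]
      rcases eq_or_ne k l with rfl | h
      · rw [if_pos rfl, if_pos rfl, inv_mul_cancel₀ (hg k), mul_one]
      · rw [if_neg h, if_neg h, mul_zero, mul_zero]
    simp [hB00, ite_mul]
  -- the first sum
  have h1 : ∀ x y : L, ∑ i, B ⁅x, v i⁆ ⁅y, u i⁆ = ∑ k, (g k)⁻¹ * B ⁅x, e k⁆ ⁅y, e k⁆ := by
    intro x y
    have := hsum (LinearMap.compl₁₂ B (LieAlgebra.ad ℝ L x) (LieAlgebra.ad ℝ L y))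
    simpa [LinearMap.compl₁₂_apply, LieAlgebra.ad_apply] using this
  -- the second sum
  have h2 : ∀ x y : L, ∑ i, ∑ j, B ⁅v i, v j⁆ x * B ⁅u i, u j⁆ y
      = ∑ k, ∑ l, (g k)⁻¹ * ((g l)⁻¹ * (B ⁅e k, e l⁆ x * B ⁅e k, e l⁆ y)) := by
    intro x y
    have step1 : ∀ a b : L, ∑ j, B ⁅a, v j⁆ x * B ⁅b, u j⁆ y
        = ∑ l, (g l)⁻¹ * (B ⁅a, e l⁆ x * B ⁅b, e l⁆ y) := by
      intro a b
      have := hsum (pairF ((B.flip x).comp (LieAlgebra.ad ℝ L a))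
        ((B.flip y).comp (LieAlgebra.ad ℝ L b)))
      simpa [LieAlgebra.ad_apply, LinearMap.flip_apply] using this
    have step2 : ∀ l, ∑ i, B ⁅v i, e l⁆ x * B ⁅u i, e l⁆ y
        = ∑ k, (g k)⁻¹ * (B ⁅e k, e l⁆ x * B ⁅e k, e l⁆ y) := by
      intro l
      have hprod : ∀ (a b : L), B ⁅a, e l⁆ x * B ⁅b, e l⁆ y
          = B ⁅e l, a⁆ x * B ⁅e l, b⁆ y := by
        intro a b
        rw [← lie_skew a (e l), ← lie_skew b (e l), map_neg, LinearMap.neg_apply, map_neg,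
          LinearMap.neg_apply, neg_mul_neg]
      have := hsum (pairF ((B.flip x).comp (LieAlgebra.ad ℝ L (e l)))
        ((B.flip y).comp (LieAlgebra.ad ℝ L (e l))))
      simp only [pairF_apply, LinearMap.comp_apply, LieAlgebra.ad_apply,
        LinearMap.flip_apply] at this
      calc ∑ i, B ⁅v i, e l⁆ x * B ⁅u i, e l⁆ y
          = ∑ i, B ⁅e l, v i⁆ x * B ⁅e l, u i⁆ y :=
            Finset.sum_congr rfl fun i _ => hprod _ _
        _ = ∑ k, (g k)⁻¹ * (B ⁅e l, e k⁆ x * B ⁅e l, e k⁆ y) := this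
        _ = ∑ k, (g k)⁻¹ * (B ⁅e k, e l⁆ x * B ⁅e k, e l⁆ y) := by
            refine Finset.sum_congr rfl fun k _ => ?_
            rw [hprod]
    simp only [step1]
    rw [Finset.sum_comm]
    calc ∑ l, ∑ i, (g l)⁻¹ * (B ⁅v i, e l⁆ x * B ⁅u i, e l⁆ y)
        = ∑ l, (g l)⁻¹ * ∑ i, B ⁅v i, e l⁆ x * B ⁅u i, e l⁆ y := by
          refine Finset.sum_congr rfl fun l _ => ?_
          rw [Finset.mul_sum]
      _ = ∑ l, ∑ k, (g l)⁻¹ * ((g k)⁻¹ * (B ⁅e k, e l⁆ x * B ⁅e k, e l⁆ y)) := by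
          refine Finset.sum_congr rfl fun l _ => ?_
          rw [step2, Finset.mul_sum]
      _ = ∑ k, ∑ l, (g k)⁻¹ * ((g l)⁻¹ * (B ⁅e k, e l⁆ x * B ⁅e k, e l⁆ y)) := by
          rw [Finset.sum_comm]
          exact Finset.sum_congr rfl fun k _ => Finset.sum_congr rfl fun l _ => by ring
  -- properties of the structure constants
  have hskew : ∀ i j : Fin n, ⁅e i, e j⁆ = -⁅e j, e i⁆ := fun i j => (lie_skew (e i) (e j)).symm
  have hrepr_ne : ∀ p i : Fin n, p ≠ i → ⁅e p, e i⁆ ≠ 0 → e.repr ⁅e i, e p⁆ (d p i) ≠ 0 := by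
    intro p i hpi h
    obtain ⟨hr, hc⟩ := hcd p i hpi h
    have hrr : ⁅e i, e p⁆ = (-(c p i)) • e (d p i) := by
      rw [hskew i p, hr, neg_smul]
    rw [hrr]
    simp only [map_smul, Finsupp.smul_apply, Module.Basis.repr_self, Finsupp.single_eq_same,
      smul_eq_mul, mul_one]
    simpa using hc
  have hsymcd : ∀ i j : Fin n, i ≠ j → ⁅e i, e j⁆ ≠ 0 →
      d j i = d i j ∧ c j i = -(c i j) := by
    intro i j hij h
    obtain ⟨hr, hc⟩ := hcd i j hij h
    have hji : ⁅e j, e i⁆ ≠ 0 := by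
      intro h0
      apply h
      rw [hskew i j, h0, neg_zero]
    obtain ⟨hr', hc'⟩ := hcd j i (Ne.symm hij) hji
    have heq : c j i • e (d j i) = (-(c i j)) • e (d i j) := by
      rw [← hr', hskew j i, hr, neg_smul]
    have := congrArg e.repr heq
    simp only [map_smul, Module.Basis.repr_self, Finsupp.smul_single, smul_eq_mul, mul_one] at this
    rcases (Finsupp.single_eq_single_iff _ _ _ _).mp this with ⟨hd1, hc1⟩ | ⟨hc1, _⟩
    · exact ⟨hd1, hc1⟩
    · exact absurd hc1 hc'
  constructor
  · -- off-diagonal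
    intro p q hpq
    have hS1 : ∀ i, B ⁅e p, e i⁆ ⁅e q, e i⁆ = 0 := by
      intro i
      by_cases h1 : ⁅e p, e i⁆ = 0
      · simp [h1]
      by_cases h2 : ⁅e q, e i⁆ = 0
      · simp [h2]
      have hpi : p ≠ i := by rintro rfl; exact h1 (lie_self _)
      have hqi : q ≠ i := by rintro rfl; exact h2 (lie_self _)
      obtain ⟨hr1, hc1⟩ := hcd p i hpi h1
      obtain ⟨hr2, hc2⟩ := hcd q i hqi h2
      have hd : d p i ≠ d q i := by
        intro hdd
        exact hpq (he.2 i (d p i) p q (hrepr_ne p i hpi h1)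
          (by rw [hdd]; exact hrepr_ne q i hqi h2))
      rw [hr1, hr2]
      simp only [map_smul, LinearMap.smul_apply, smul_eq_mul, hB]
      rw [if_neg hd]
      ring
    have hS2 : ∀ i j, B ⁅e i, e j⁆ (e p) * B ⁅e i, e j⁆ (e q) = 0 := by
      intro i j
      by_cases h : ⁅e i, e j⁆ = 0
      · simp [h]
      have hij : i ≠ j := by rintro rfl; exact h (lie_self _)
      obtain ⟨hr, hc⟩ := hcd i j hij h
      rw [hr]
      simp only [map_smul, LinearMap.smul_apply, smul_eq_mul, hB]
      rcases eq_or_ne (d i j) q with hdq | hdq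
      · rw [if_neg (show d i j ≠ p from fun hp => hpq (hp.symm.trans hdq))]
        ring
      · rw [if_neg hdq]
        ring
    simp only [ricci]
    rw [h1, h2]
    simp [hS1, hS2]
  · -- diagonal
    intro k
    simp only [ricci]
    rw [h1, h2]
    have e1 : ∀ i, (g i)⁻¹ * B ⁅e k, e i⁆ ⁅e k, e i⁆
        = if ⁅e (k : Fin n), e i⁆ ≠ 0 then c k i ^ 2 * g (d k i) / g i else 0 := by
      intro i
      by_cases h : ⁅e k, e i⁆ = 0
      · simp [h]
      have hki : k ≠ i := by rintro rfl; exact h (lie_self _)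
      obtain ⟨hr, hc⟩ := hcd k i hki h
      rw [if_pos h, hr]
      simp only [map_smul, LinearMap.smul_apply, smul_eq_mul, hB, if_pos rfl]
      field_simp
      rw [if_pos trivial]
    have e2 : ∀ i j, (g i)⁻¹ * ((g j)⁻¹ * (B ⁅e i, e j⁆ (e k) * B ⁅e i, e j⁆ (e k)))
        = if d i j = k ∧ ⁅e i, e j⁆ ≠ 0 then c i j ^ 2 * g k ^ 2 / (g i * g j) else 0 := by
      intro i j
      by_cases h : ⁅e i, e j⁆ = 0
      · simp [h]
      have hij : i ≠ j := by rintro rfl; exact h (lie_self _)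
      obtain ⟨hr, hc⟩ := hcd i j hij h
      have hl : B ⁅e i, e j⁆ (e k) = c i j * (if d i j = k then g (d i j) else 0) := by
        rw [hr]
        simp only [map_smul, LinearMap.smul_apply, smul_eq_mul, hB]
      rw [hl]
      by_cases hdk : d i j = k
      · rw [if_pos hdk, if_pos ⟨hdk, h⟩, hdk]
        field_simp
      · rw [if_neg hdk, if_neg (by tauto)]
        ring
    have hFsym : ∀ i j : Fin n,
        (if d j i = k ∧ ⁅e j, e i⁆ ≠ 0 then c j i ^ 2 * g k ^ 2 / (g j * g i) else 0)
        = if d i j = k ∧ ⁅e i, e j⁆ ≠ 0 then c i j ^ 2 * g k ^ 2 / (g i * g j) else 0 := by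
      intro i j
      by_cases h : ⁅e i, e j⁆ = 0
      · have h' : ⁅e j, e i⁆ = 0 := by rw [hskew j i, h, neg_zero]
        simp [h, h']
      have hij : i ≠ j := by rintro rfl; exact h (lie_self _)
      have h' : ⁅e j, e i⁆ ≠ 0 := by
        intro h0; apply h; rw [hskew i j, h0, neg_zero]
      obtain ⟨hd1, hc1⟩ := hsymcd i j hij h
      rw [hd1, hc1]
      by_cases hdk : d i j = k
      · rw [if_pos ⟨hdk, h'⟩, if_pos ⟨hdk, h⟩]
        ring
      · rw [if_neg (by tauto), if_neg (by tauto)]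
    have hFdiag : ∀ i : Fin n,
        (if d i i = k ∧ ⁅e i, e i⁆ ≠ 0 then c i i ^ 2 * g k ^ 2 / (g i * g i) else 0) = 0 := by
      intro i
      simp
    have hBsum : ∑ i, (g i)⁻¹ * B ⁅e k, e i⁆ ⁅e k, e i⁆
        = ∑ i : Fin n, if ⁅e (k : Fin n), e i⁆ ≠ 0 then c k i ^ 2 * g (d k i) / g i else 0 :=
      Finset.sum_congr rfl fun i _ => e1 i
    have hA : (∑ i, ∑ j, (g i)⁻¹ * ((g j)⁻¹ * (B ⁅e i, e j⁆ (e k) * B ⁅e i, e j⁆ (e k))))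
        = 2 * ∑ i : Fin n, ∑ j : Fin n,
            if i < j ∧ d i j = k ∧ ⁅e i, e j⁆ ≠ 0 then
              c i j ^ 2 * g k ^ 2 / (g i * g j) else 0 := by
      rw [show (∑ i, ∑ j, (g i)⁻¹ * ((g j)⁻¹ * (B ⁅e i, e j⁆ (e k) * B ⁅e i, e j⁆ (e k))))
          = ∑ i : Fin n, ∑ j : Fin n,
              (fun i j => if d i j = k ∧ ⁅e i, e j⁆ ≠ 0 then
                c i j ^ 2 * g k ^ 2 / (g i * g j) else 0) i j from
        Finset.sum_congr rfl fun i _ => Finset.sum_congr rfl fun j _ => e2 i j]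
      rw [double_sum_symm _ hFsym hFdiag]
      congr 1
      refine Finset.sum_congr rfl fun i _ => Finset.sum_congr rfl fun j _ => ?_
      by_cases hlt : i < j
      · simp [hlt]
      · simp [hlt]
    rw [hBsum, hA]
    ring
end

section
/- Let 𝔤 be a real nilpotent Lie algebra with a nice basis (e_1,…,e_n); for i ≠ j with [e_i,e_j] ≠ 0 write [e_i,e_j] = c_{ij}·e_{d(i,j)} with c_{ij} ≠ 0. Let s be an involution of {1,…,n} that is a diagram involution, i.e. whenever [e_i,e_j] ≠ 0 also [e_{s(i)},e_{s(j)}] ≠ 0 and d(s(i),s(j)) = s(d(i,j)). Let (g_i) be nonzero real numbers with g_{s(i)} = g_i, and let ⟨·,·⟩ be the σ-diagonal metric determined by ⟨e_i, e_{s(i)}⟩ = g_i and ⟨e_i, e_j⟩ = 0 whenever j ≠ s(i). Then ric(e_k, e_l) = 0 whenever l ≠ s(k), and for every k, ric(e_k, e_{s(k)}) = (1/2)·Σ_{i<j, d(i,j)=k} c_{ij}·c_{s(i)s(j)} · g_k² / (g_i g_j) − (1/2)·Σ_{i: [e_k,e_i]≠0} c_{ki}·c_{s(k)s(i)} · g_{d(k,i)}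 / g_i. -/
open Classical

lemma key {L : Type} [LieRing L] [LieAlgebra ℝ L] {n : ℕ} (e : Module.Basis (Fin n) ℝ L)
    (s : Fin n → Fin n) (hs : Function.Involutive s)
    (g : Fin n → ℝ) (hg : ∀ i, g i ≠ 0) (hgs : ∀ i, g (s i) = g i)
    (B : LinearMap.BilinForm ℝ L)
    (hB : ∀ i j, B (e i) (e j) = if j = s i then g i else 0)
    {ι : Type} [Fintype ι] (v : Module.Basis ι ℝ L) (u : ι → L)
    (huv : ∀ i j, B (v i) (u j) = if i = j then (1 : ℝ) else 0)
    (F : L →ₗ[ℝ] L →ₗ[ℝ] ℝ) :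
    ∑ i, F (v i) (u i) = ∑ k, F (e k) ((g k)⁻¹ • e (s k)) := by
  have h1 : ∀ (z : L) (j : ι), B z (u j) = v.repr z j := by
    intro z j
    nth_rewrite 1 [← v.sum_repr z]
    rw [map_sum, LinearMap.sum_apply]
    rw [Finset.sum_eq_single j]
    · rw [map_smul, LinearMap.smul_apply, smul_eq_mul, huv j j]; simp
    · intro i _ hij; rw [map_smul, LinearMap.smul_apply, smul_eq_mul, huv i j]; simp [hij]
    · simp
  have h2 : ∀ (i : ι) (p : Fin n), e.repr (u i) p = v.repr (e (s p)) i / g p := by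
    intro i p
    have ha : B (e (s p)) (u i) = v.repr (e (s p)) i := h1 _ _
    have hb : B (e (s p)) (u i) = g p * e.repr (u i) p := by
      nth_rewrite 1 [← e.sum_repr (u i)]
      rw [map_sum, Finset.sum_eq_single p]
      · rw [map_smul, smul_eq_mul, hB, if_pos (hs p).symm, hgs]; ring
      · intro m _ hmp
        rw [map_smul, smul_eq_mul, hB, if_neg, mul_zero]
        rw [hs p]; exact hmp
      · simp
    rw [eq_div_iff (hg p), ← ha, hb]; ring
  have h3 : ∀ i : ι, F (v i) (u i) = ∑ m, ∑ p, e.repr (v i) m * e.repr (u i) p * F (e m) (e p) := by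
    intro i
    calc F (v i) (u i) = ∑ p, F (v i) (e.repr (u i) p • e p) := by
          nth_rewrite 1 [← e.sum_repr (u i)]; rw [map_sum]
      _ = ∑ p, ∑ m, e.repr (v i) m * e.repr (u i) p * F (e m) (e p) := by
          refine Finset.sum_congr rfl fun p _ => ?_
          rw [map_smul, smul_eq_mul]
          nth_rewrite 1 [← e.sum_repr (v i)]
          rw [map_sum, LinearMap.sum_apply, Finset.mul_sum]
          refine Finset.sum_congr rfl fun m _ => ?_
          rw [map_smul, LinearMap.smul_apply, smul_eq_mul]; ring
      _ = ∑ m, ∑ p, e.repr (v i) m * e.repr (u i) p * F (e m) (e p) := Finset.sum_comm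
  have h4 : ∀ (p : Fin n) (m : Fin n), ∑ i, v.repr (e (s p)) i * e.repr (v i) m = e.repr (e (s p)) m := by
    intro p m
    have : (e.repr (∑ i, v.repr (e (s p)) i • v i)) m = ∑ i, v.repr (e (s p)) i * e.repr (v i) m := by
      rw [map_sum, Finset.sum_apply']
      refine Finset.sum_congr rfl fun i _ => ?_
      rw [map_smul]; simp
    rw [← this, v.sum_repr]
  calc ∑ i, F (v i) (u i)
      = ∑ i, ∑ m, ∑ p, e.repr (v i) m * e.repr (u i) p * F (e m) (e p) :=
        Finset.sum_congr rfl fun i _ => h3 i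
    _ = ∑ m, ∑ p, ∑ i, e.repr (v i) m * e.repr (u i) p * F (e m) (e p) := by
        rw [Finset.sum_comm]
        exact Finset.sum_congr rfl fun m _ => Finset.sum_comm
    _ = ∑ m, ∑ p, (e.repr (e (s p)) m) * (F (e m) (e p) / g p) := by
        refine Finset.sum_congr rfl fun m _ => Finset.sum_congr rfl fun p _ => ?_
        rw [← h4 p m, Finset.sum_mul]
        refine Finset.sum_congr rfl fun i _ => ?_
        rw [h2 i p]; field_simp
    _ = ∑ p, F (e (s p)) (e p) / g p := by
        rw [Finset.sum_comm]
        refine Finset.sum_congr rfl fun p _ => ?_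
        simp [Module.Basis.repr_self, Finsupp.single_apply]
    _ = ∑ k, F (e k) ((g k)⁻¹ • e (s k)) := by
        refine Fintype.sum_equiv (Function.Involutive.toPerm s hs) _ _ fun p => ?_
        simp only [Function.Involutive.coe_toPerm, map_smul, smul_eq_mul, hs p, hgs]
        rw [div_eq_inv_mul]


lemma sum_sym_aux {n : ℕ} (f : Fin n → Fin n → ℝ) (hf0 : ∀ i, f i i = 0)
    (hfsym : ∀ i j, f j i = f i j) :
    ∑ i, ∑ j, f i j = 2 * ∑ i, ∑ j, if i < j then f i j else 0 := by
  have hsplit : ∀ i j, f i j = (if i < j then f i j else 0) + (if j < i then f i j else 0) := by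
    intro i j
    rcases lt_trichotomy i j with h|h|h
    · rw [if_pos h, if_neg (asymm h), add_zero]
    · subst h; simp [hf0]
    · rw [if_neg (asymm h), if_pos h, zero_add]
  calc ∑ i, ∑ j, f i j
      = ∑ i, ∑ j, ((if i < j then f i j else 0) + (if j < i then f i j else 0)) :=
        Finset.sum_congr rfl fun i _ => Finset.sum_congr rfl fun j _ => hsplit i j
    _ = (∑ i, ∑ j, if i < j then f i j else 0) + ∑ i, ∑ j, if j < i then f i j else 0 := by
        rw [← Finset.sum_add_distrib]
        exact Finset.sum_congr rfl fun i _ => Finset.sum_add_distrib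
    _ = 2 * ∑ i, ∑ j, if i < j then f i j else 0 := by
        have h2 : ∑ i, ∑ j, (if j < i then f i j else 0) = ∑ i, ∑ j, if i < j then f i j else 0 := by
          rw [Finset.sum_comm]
          exact Finset.sum_congr rfl fun i _ => Finset.sum_congr rfl fun j _ => by rw [hfsym i j]
        rw [h2]; ring

/-- The Ricci tensor of a σ-diagonal metric on a nice nilpotent Lie algebra, for a
diagram involution `s`, is again σ-diagonal, with explicit entries. -/
theorem ricci_sigma_diagonal_metric_nice {L : Type} [LieRing L] [LieAlgebra ℝ L]
    [LieRing.IsNilpotent L] {n : ℕ}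
    (e : Module.Basis (Fin n) ℝ L) (he : IsNiceBasis e)
    (c : Fin n → Fin n → ℝ) (d : Fin n → Fin n → Fin n)
    (hcd : ∀ i j, i ≠ j → ⁅e i, e j⁆ ≠ 0 →
      ⁅e i, e j⁆ = c i j • e (d i j) ∧ c i j ≠ 0)
    (s : Fin n → Fin n) (hs : Function.Involutive s)
    (hdi : ∀ i j, i ≠ j → ⁅e i, e j⁆ ≠ 0 →
      ⁅e (s i), e (s j)⁆ ≠ 0 ∧ d (s i) (s j) = s (d i j))
    (g : Fin n → ℝ) (hg : ∀ i, g i ≠ 0) (hgs : ∀ i, g (s i) = g i)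
    (B : LinearMap.BilinForm ℝ L)
    (hB : ∀ i j, B (e i) (e j) = if j = s i then g i else 0) :
    ∀ (ι : Type) [Fintype ι] (v : Module.Basis ι ℝ L) (u : ι → L),
      IsDualPair B (⇑v) u →
        (∀ k l, l ≠ s k → ricci B (⇑v) u (e k) (e l) = 0) ∧
        (∀ k, ricci B (⇑v) u (e k) (e (s k)) =
          (1 / 2 : ℝ) * (∑ i : Fin n, ∑ j : Fin n,
              if i < j ∧ d i j = k ∧ ⁅e i, e j⁆ ≠ 0 then
                c i j * c (s i) (s j) * g k ^ 2 / (g i * g j) else 0)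
            - (1 / 2 : ℝ) * ∑ i : Fin n,
              if ⁅e (k : Fin n), e i⁆ ≠ 0 then
                c k i * c (s k) (s i) * g (d k i) / g i else 0) := by
  intro ι _ v u huv
  -- derived bracket facts
  have hne : ∀ i j : Fin n, ⁅e i, e j⁆ ≠ 0 → i ≠ j := by
    intro i j h hij; exact h (by rw [hij, lie_self])
  have hbr : ∀ i j, ⁅e i, e j⁆ ≠ 0 → ⁅e i, e j⁆ = c i j • e (d i j) ∧ c i j ≠ 0 :=
    fun i j h => hcd i j (hne i j h) h
  have hdi' : ∀ i j, ⁅e i, e j⁆ ≠ 0 → ⁅e (s i), e (s j)⁆ ≠ 0 ∧ d (s i) (s j) = s (d i j) :=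
    fun i j h => hdi i j (hne i j h) h
  have hdib : ∀ i j : Fin n, ⁅e (s i), e (s j)⁆ ≠ 0 → ⁅e i, e j⁆ ≠ 0 := by
    intro i j h
    have := (hdi' (s i) (s j) h).1
    rwa [hs i, hs j] at this
  have hrepr : ∀ i j, ⁅e i, e j⁆ ≠ 0 → e.repr ⁅e i, e j⁆ (d i j) = c i j := by
    intro i j h
    rw [(hbr i j h).1, map_smul]
    simp [Module.Basis.repr_self]
  -- values of B on scaled basis vectors
  have hBe : ∀ (a : ℝ) (p : Fin n) (b : ℝ) (q : Fin n),
      B (a • e p) (b • e q) = a * b * (if q = s p then g p else 0) := by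
    intro a p b q
    simp only [map_smul, LinearMap.smul_apply, smul_eq_mul, hB]; ring
  -- key uniqueness consequence of niceness
  have huniq : ∀ a b i : Fin n, ⁅e a, e i⁆ ≠ 0 → ⁅e b, e (s i)⁆ ≠ 0 →
      d b (s i) = s (d a i) → b = s a := by
    intro a b i ha hbb hd
    have h1 : ⁅e (s b), e i⁆ ≠ 0 ∧ d (s b) i = d a i := by
      have := hdi' b (s i) hbb
      rw [hs i] at this
      refine ⟨this.1, ?_⟩
      rw [this.2, hd, hs]
    have r1 : e.repr ⁅e i, e a⁆ (d a i) ≠ 0 := by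
      rw [← lie_skew, map_neg]
      simp only [Finsupp.coe_neg, Pi.neg_apply, ne_eq, neg_eq_zero]
      rw [hrepr a i ha]; exact (hbr a i ha).2
    have r2 : e.repr ⁅e i, e (s b)⁆ (d a i) ≠ 0 := by
      rw [← lie_skew, map_neg]
      simp only [Finsupp.coe_neg, Pi.neg_apply, ne_eq, neg_eq_zero]
      rw [← h1.2, hrepr (s b) i h1.1]
      exact (hbr (s b) i h1.1).2
    have := he.2 i (d a i) a (s b) r1 r2
    rw [this, hs]
  -- term lemmas
  have hterm1 : ∀ a b i : Fin n, b ≠ s a → B ⁅e a, e i⁆ ⁅e b, e (s i)⁆ = 0 := by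
    intro a b i hba
    by_cases h1 : ⁅e a, e i⁆ = 0
    · rw [h1, map_zero, LinearMap.zero_apply]
    by_cases h2 : ⁅e b, e (s i)⁆ = 0
    · rw [h2, map_zero]
    rw [(hbr a i h1).1, (hbr b (s i) h2).1, hBe]
    rw [if_neg, mul_zero]
    intro hd
    exact hba (huniq a b i h1 h2 hd)
  have hterm2 : ∀ a i : Fin n, B ⁅e a, e i⁆ ⁅e (s a), e (s i)⁆ =
      if ⁅e a, e i⁆ ≠ 0 then c a i * c (s a) (s i) * g (d a i) else 0 := by
    intro a i
    by_cases h1 : ⁅e a, e i⁆ = 0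
    · rw [h1, map_zero, LinearMap.zero_apply, if_neg (by simpa using h1)]
    rw [if_pos h1]
    obtain ⟨h2, hd2⟩ := hdi' a i h1
    rw [(hbr a i h1).1, (hbr (s a) (s i) h2).1, hBe, hd2, if_pos rfl]
  have hterm3 : ∀ a b i j : Fin n, b ≠ s a →
      B ⁅e i, e j⁆ (e a) * B ⁅e (s i), e (s j)⁆ (e b) = 0 := by
    intro a b i j hba
    by_cases h1 : ⁅e i, e j⁆ = 0
    · rw [h1, map_zero, LinearMap.zero_apply, zero_mul]
    obtain ⟨h2, hd2⟩ := hdi' i j h1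
    rw [(hbr i j h1).1, (hbr (s i) (s j) h2).1, map_smul, LinearMap.smul_apply, smul_eq_mul,
      map_smul, LinearMap.smul_apply, smul_eq_mul, hB, hB, hd2]
    by_cases ha : a = s (d i j)
    · have e2 : b ≠ s (s (d i j)) := by rw [← ha]; exact hba
      rw [if_neg e2, mul_zero, mul_zero]
    · rw [if_neg ha, mul_zero, zero_mul]
  have hterm4 : ∀ a i j : Fin n, B ⁅e i, e j⁆ (e a) * B ⁅e (s i), e (s j)⁆ (e (s a)) =
      if d i j = s a ∧ ⁅e i, e j⁆ ≠ 0 then c i j * c (s i) (s j) * g a ^ 2 else 0 := by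
    intro a i j
    by_cases h1 : ⁅e i, e j⁆ = 0
    · rw [h1, map_zero, LinearMap.zero_apply, zero_mul, if_neg (by simp [h1])]
    obtain ⟨h2, hd2⟩ := hdi' i j h1
    by_cases ha : d i j = s a
    · rw [if_pos (show d i j = s a ∧ ⁅e i, e j⁆ ≠ 0 from ⟨ha, h1⟩)]
      have e1 : a = s (d i j) := by rw [ha, hs]
      have e2 : s a = s (s (d i j)) := by rw [hs, ha]
      rw [(hbr i j h1).1, (hbr (s i) (s j) h2).1, map_smul, LinearMap.smul_apply, smul_eq_mul,
        map_smul, LinearMap.smul_apply, smul_eq_mul, hB, hB, hd2, if_pos e1, if_pos e2,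
        ha, hs, hgs]
      ring
    · rw [if_neg (show ¬(d i j = s a ∧ ⁅e i, e j⁆ ≠ 0) from fun h => ha h.1)]
      have e2 : s a ≠ s (s (d i j)) := by rw [hs]; intro hb; exact ha hb.symm
      rw [(hbr i j h1).1, (hbr (s i) (s j) h2).1, map_smul, LinearMap.smul_apply, smul_eq_mul,
        map_smul, LinearMap.smul_apply, smul_eq_mul, hB, hB, hd2, if_neg e2, mul_zero, mul_zero]
  -- antisymmetry of structure constants
  have hswap : ∀ i j : Fin n, ⁅e i, e j⁆ ≠ 0 → ⁅e j, e i⁆ ≠ 0 :=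
    fun i j h hz => h (by rw [← lie_skew, hz, neg_zero])
  have hanti : ∀ i j : Fin n, ⁅e i, e j⁆ ≠ 0 → d j i = d i j ∧ c j i = -c i j := by
    intro i j h
    have hne0 : ⁅e j, e i⁆ ≠ 0 := hswap i j h
    have eq1 : c j i • e (d j i) = (-c i j) • e (d i j) := by
      rw [← (hbr j i hne0).1, ← lie_skew, (hbr i j h).1, neg_smul]
    have h5 := congrArg (fun z => e.repr z (d j i)) eq1
    simp only [map_smul, Module.Basis.repr_self, Finsupp.smul_single, smul_eq_mul, mul_one,
      Finsupp.single_apply, eq_self_iff_true, if_true] at h5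
    by_cases hd : d i j = d j i
    · rw [if_pos hd] at h5
      exact ⟨hd.symm, h5⟩
    · rw [if_neg hd] at h5
      exact absurd h5 (hbr j i hne0).2
  -- reduction of the dual-pair sums to the canonical pair
  have hF1 : ∀ x y : L, ∑ i, B ⁅x, v i⁆ ⁅y, u i⁆
      = ∑ p, (g p)⁻¹ * B ⁅x, e p⁆ ⁅y, e (s p)⁆ := by
    intro x y
    have hk := key e s hs g hg hgs B hB v u huv
      (B.compl₁₂ (LieAlgebra.ad ℝ L x) (LieAlgebra.ad ℝ L y))
    simp only [LinearMap.compl₁₂_apply, LieAlgebra.ad_apply] at hk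
    rw [hk]
    refine Finset.sum_congr rfl fun p _ => ?_
    rw [lie_smul, map_smul, smul_eq_mul]
  have hneg : ∀ z a w : L, B ⁅a, z⁆ w = -(B ⁅z, a⁆ w) := by
    intro z a w
    rw [← lie_skew z a, map_neg, LinearMap.neg_apply, neg_neg]
  have hF2 : ∀ x y : L, ∑ i, ∑ j, B ⁅v i, v j⁆ x * B ⁅u i, u j⁆ y
      = ∑ p, ∑ q, (g p)⁻¹ * ((g q)⁻¹ * (B ⁅e p, e q⁆ x * B ⁅e (s p), e (s q)⁆ y)) := by
    intro x y
    have step1 : ∀ z w : L, ∑ j, B ⁅z, v j⁆ x * B ⁅w, u j⁆ y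
        = ∑ q, B ⁅z, e q⁆ x * B ⁅w, (g q)⁻¹ • e (s q)⁆ y := by
      intro z w
      have hk := key e s hs g hg hgs B hB v u huv
        (LinearMap.smulRight ((B.flip x).comp (LieAlgebra.ad ℝ L z))
          ((B.flip y).comp (LieAlgebra.ad ℝ L w)))
      simpa only [LinearMap.smulRight_apply, LinearMap.coe_comp, Function.comp_apply,
        LieAlgebra.ad_apply, LinearMap.flip_apply, LinearMap.BilinForm.flip,
        LinearMap.BilinForm.flip_apply, LinearMap.smul_apply, smul_eq_mul] using hk
    have step2 : ∀ q : Fin n, ∑ i, B ⁅v i, e q⁆ x * B ⁅u i, (g q)⁻¹ • e (s q)⁆ y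
        = ∑ p, B ⁅e p, e q⁆ x * B ⁅(g p)⁻¹ • e (s p), (g q)⁻¹ • e (s q)⁆ y := by
      intro q
      have hk := key e s hs g hg hgs B hB v u huv
        (LinearMap.smulRight (-((B.flip x).comp (LieAlgebra.ad ℝ L (e q))))
          (-((B.flip y).comp (LieAlgebra.ad ℝ L ((g q)⁻¹ • e (s q))))))
      simp only [LinearMap.smulRight_apply, LinearMap.neg_apply, LinearMap.coe_comp,
        Function.comp_apply, LieAlgebra.ad_apply, LinearMap.flip_apply, LinearMap.smul_apply,
        smul_eq_mul, neg_mul_neg] at hk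
      calc ∑ i, B ⁅v i, e q⁆ x * B ⁅u i, (g q)⁻¹ • e (s q)⁆ y
          = ∑ i, B ⁅e q, v i⁆ x * B ⁅(g q)⁻¹ • e (s q), u i⁆ y := by
            refine Finset.sum_congr rfl fun i _ => ?_
            rw [hneg (e q) (v i) x, hneg ((g q)⁻¹ • e (s q)) (u i) y]; ring
        _ = ∑ p, B ⁅e q, e p⁆ x * B ⁅(g q)⁻¹ • e (s q), (g p)⁻¹ • e (s p)⁆ y := hk
        _ = ∑ p, B ⁅e p, e q⁆ x * B ⁅(g p)⁻¹ • e (s p), (g q)⁻¹ • e (s q)⁆ y := by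
            refine Finset.sum_congr rfl fun p _ => ?_
            rw [hneg (e q) (e p) x, hneg ((g q)⁻¹ • e (s q)) ((g p)⁻¹ • e (s p)) y]; ring
    calc ∑ i, ∑ j, B ⁅v i, v j⁆ x * B ⁅u i, u j⁆ y
        = ∑ i, ∑ q, B ⁅v i, e q⁆ x * B ⁅u i, (g q)⁻¹ • e (s q)⁆ y :=
          Finset.sum_congr rfl fun i _ => step1 (v i) (u i)
      _ = ∑ q, ∑ i, B ⁅v i, e q⁆ x * B ⁅u i, (g q)⁻¹ • e (s q)⁆ y := Finset.sum_comm
      _ = ∑ q, ∑ p, B ⁅e p, e q⁆ x * B ⁅(g p)⁻¹ • e (s p), (g q)⁻¹ • e (s q)⁆ y :=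
          Finset.sum_congr rfl fun q _ => step2 q
      _ = ∑ p, ∑ q, B ⁅e p, e q⁆ x * B ⁅(g p)⁻¹ • e (s p), (g q)⁻¹ • e (s q)⁆ y := Finset.sum_comm
      _ = ∑ p, ∑ q, (g p)⁻¹ * ((g q)⁻¹ * (B ⁅e p, e q⁆ x * B ⁅e (s p), e (s q)⁆ y)) := by
          refine Finset.sum_congr rfl fun p _ => Finset.sum_congr rfl fun q _ => ?_
          rw [smul_lie, lie_smul, map_smul, map_smul, LinearMap.smul_apply,
            LinearMap.smul_apply, smul_eq_mul, smul_eq_mul]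
          ring
  constructor
  · -- off-diagonal vanishing
    intro k l hlk
    simp only [ricci]
    rw [hF1, hF2]
    have z1 : ∀ p : Fin n, (g p)⁻¹ * B ⁅e k, e p⁆ ⁅e l, e (s p)⁆ = 0 := by
      intro p; rw [hterm1 k l p hlk, mul_zero]
    have z2 : ∀ p q : Fin n,
        (g p)⁻¹ * ((g q)⁻¹ * (B ⁅e p, e q⁆ (e k) * B ⁅e (s p), e (s q)⁆ (e l))) = 0 := by
      intro p q; rw [hterm3 k l p q hlk, mul_zero, mul_zero]
    simp only [z1, z2, Finset.sum_const_zero, mul_zero, neg_mul, add_zero, neg_zero, zero_add]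
  · -- diagonal entry
    intro k
    simp only [ricci]
    rw [hF1, hF2]
    have S1 : ∑ p, (g p)⁻¹ * B ⁅e k, e p⁆ ⁅e (s k), e (s p)⁆
        = ∑ i, if ⁅e k, e i⁆ ≠ 0 then c k i * c (s k) (s i) * g (d k i) / g i else 0 := by
      refine Finset.sum_congr rfl fun p _ => ?_
      rw [hterm2]
      by_cases h : ⁅e k, e p⁆ = 0
      · simp [h]
      · rw [if_pos h, if_pos h, div_eq_inv_mul]
    set f : Fin n → Fin n → ℝ := fun i j =>
      if d i j = k ∧ ⁅e i, e j⁆ ≠ 0 then c i j * c (s i) (s j) * g k ^ 2 / (g i * g j) else 0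
      with hfdef
    have S2 : ∑ p, ∑ q, (g p)⁻¹ * ((g q)⁻¹ * (B ⁅e p, e q⁆ (e k) * B ⁅e (s p), e (s q)⁆ (e (s k))))
        = ∑ p, ∑ q, f (s p) (s q) := by
      refine Finset.sum_congr rfl fun p _ => Finset.sum_congr rfl fun q _ => ?_
      rw [hterm4]
      simp only [hfdef]
      by_cases h : d p q = s k ∧ ⁅e p, e q⁆ ≠ 0
      · have hc1 : d (s p) (s q) = k ∧ ⁅e (s p), e (s q)⁆ ≠ 0 := by
          refine ⟨?_, (hdi' p q h.2).1⟩
          rw [(hdi' p q h.2).2, h.1, hs]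
        rw [if_pos h, if_pos hc1, hs p, hs q, hgs p, hgs q]
        ring
      · have hc1 : ¬(d (s p) (s q) = k ∧ ⁅e (s p), e (s q)⁆ ≠ 0) := by
          intro h'
          refine h ⟨?_, hdib p q h'.2⟩
          have hh := (hdi' p q (hdib p q h'.2)).2
          rw [hh] at h'
          rw [← h'.1, hs]
        rw [if_neg h, if_neg hc1, mul_zero, mul_zero]
    have S2' : ∑ p, ∑ q, f (s p) (s q) = ∑ p, ∑ q, f p q := by
      have hinner : ∀ p : Fin n, ∑ q, f p (s q) = ∑ q, f p q :=
        fun p => Fintype.sum_equiv (Function.Involutive.toPerm s hs) _ _ (fun q => rfl)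
      calc ∑ p, ∑ q, f (s p) (s q)
          = ∑ p, ∑ q, f p (s q) :=
            Fintype.sum_equiv (Function.Involutive.toPerm s hs) _ _ (fun p => rfl)
        _ = ∑ p, ∑ q, f p q := Finset.sum_congr rfl fun p _ => hinner p
    have hf0 : ∀ i, f i i = 0 := by
      intro i; simp only [hfdef]; simp [lie_self]
    have hfsym : ∀ i j, f j i = f i j := by
      intro i j
      simp only [hfdef]
      by_cases h : d i j = k ∧ ⁅e i, e j⁆ ≠ 0
      · have hji : ⁅e j, e i⁆ ≠ 0 := hswap i j h.2
        have hsji : ⁅e (s j), e (s i)⁆ ≠ 0 := (hdi' j i hji).1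
        obtain ⟨hd1, hc1⟩ := hanti i j h.2
        obtain ⟨hd2, hc2⟩ := hanti (s i) (s j) (hdi' i j h.2).1
        rw [if_pos ⟨by rw [hd1, h.1], hji⟩, if_pos h, hc1, hc2]
        ring
      · have hji : ¬(d j i = k ∧ ⁅e j, e i⁆ ≠ 0) := by
          intro h'
          have hij : ⁅e i, e j⁆ ≠ 0 := hswap j i h'.2
          exact h ⟨by rw [← (hanti i j hij).1, h'.1], hij⟩
        rw [if_neg hji, if_neg h]
    have Tmerge : ∑ i, ∑ j, (if i < j then f i j else 0)
        = ∑ i : Fin n, ∑ j : Fin n,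
            if i < j ∧ d i j = k ∧ ⁅e i, e j⁆ ≠ 0 then
              c i j * c (s i) (s j) * g k ^ 2 / (g i * g j) else 0 := by
      refine Finset.sum_congr rfl fun i _ => Finset.sum_congr rfl fun j _ => ?_
      simp only [hfdef]
      by_cases h1 : i < j
      · by_cases h2 : d i j = k ∧ ⁅e i, e j⁆ ≠ 0
        · rw [if_pos h1, if_pos h2, if_pos ⟨h1, h2⟩]
        · rw [if_pos h1, if_neg h2, if_neg (by tauto)]
      · rw [if_neg h1, if_neg (by tauto)]
    rw [S1, S2, S2', sum_sym_aux f hf0 hfsym, Tmerge]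
    ring
end

section
/- Let M be an m×n integer matrix whose reduction modulo 2 defines a surjective linear map (ℤ/2ℤ)^n → (ℤ/2ℤ)^m, let c ∈ ℝ^m have all entries nonzero, and let k ∈ ℝ. If there exists X ∈ ℝ^m with all entries nonzero such that Mᵀ X = (k, …, k), then there exists g ∈ ℝ^n with all entries nonzero such that the vector Y ∈ ℝ^m with entries Y_a = c_a² · ∏_{j=1}^n g_j^{M_{aj}} satisfies Mᵀ Y = (k, …, k). -/
open Matrix Finset

private lemma zpow_finset_sum_aux {ι : Type*} (x : ℝ) (hx : x ≠ 0) (s : Finset ι) (f : ι → ℤ) :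
    x ^ (∑ i ∈ s, f i) = ∏ i ∈ s, x ^ f i := by
  classical
  induction s using Finset.induction with
  | empty => simp
  | @insert _ _ h ih => rw [Finset.sum_insert h, Finset.prod_insert h, zpow_add₀ hx, ih]

private lemma neg_one_zpow_eq_zmod_aux (z : ℤ) :
    (-1 : ℝ) ^ z = (-1 : ℝ) ^ ((z : ZMod 2)).val := by
  rcases Int.even_or_odd z with h | h
  · rw [h.neg_one_zpow]
    have hz : ((z : ZMod 2)) = 0 := by
      rw [ZMod.intCast_zmod_eq_zero_iff_dvd]
      exact_mod_cast h.two_dvd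
    rw [hz]
    simp
  · have hz : ((z : ZMod 2)) = 1 := by
      obtain ⟨k, hk⟩ := h
      subst hk
      push_cast
      rw [show ((2 : ZMod 2)) = 0 from by decide, zero_mul, zero_add]
    rw [h.neg_one_zpow, hz]
    simp [ZMod.val_one]

/-- Mod-2 surjectivity of an integer matrix implies surjectivity of the corresponding
real linear map. -/
private lemma real_surjective_aux (m n : ℕ) (M : Matrix (Fin m) (Fin n) ℤ)
    (hsurj : Function.Surjective
      (fun v : Fin n → ZMod 2 => fun a : Fin m => ∑ j, (M a j : ZMod 2) * v j)) :
    ∀ b : Fin m → ℝ, ∃ t : Fin n → ℝ, ∀ a, ∑ j, (M a j : ℝ) * t j = b a := by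
  haveI : Fact (Nat.Prime 2) := ⟨Nat.prime_two⟩
  classical
  set g : Fin n → (Fin m → ZMod 2) := fun j a => (M a j : ZMod 2) with hg
  have hspan : Submodule.span (ZMod 2) (Set.range g) = ⊤ := by
    rw [eq_top_iff]
    rintro w -
    obtain ⟨v, hv⟩ := hsurj w
    have hw : w = ∑ j, v j • g j := by
      funext a
      rw [← congrFun hv a]
      simp [Finset.sum_apply, hg, mul_comm]
    rw [hw]
    exact Submodule.sum_mem _ fun j _ =>
      Submodule.smul_mem _ _ (Submodule.subset_span (Set.mem_range_self j))
  obtain ⟨bset, hbsub, hbspan, hbli⟩ := exists_linearIndependent (ZMod 2) (Set.range g)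
  rw [hspan] at hbspan
  have hbfin : bset.Finite := (Set.finite_range g).subset hbsub
  haveI := hbfin.fintype
  let B : Module.Basis bset (ZMod 2) (Fin m → ZMod 2) :=
    Module.Basis.mk hbli (by rw [Subtype.range_coe, hbspan])
  have hcard : Fintype.card bset = m := by
    have h1 := Module.finrank_eq_card_basis B
    have h2 : Module.finrank (ZMod 2) (Fin m → ZMod 2) = m := by
      simp [Module.finrank_fin_fun]
    omega
  let e : Fin m ≃ bset := (Fintype.equivFinOfCardEq hcard).symm
  have hchoose : ∀ i : Fin m, ∃ j : Fin n, g j = (e i : Fin m → ZMod 2) :=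
    fun i => hbsub (e i).2
  choose σ hσ using hchoose
  set N : Matrix (Fin m) (Fin m) ℤ := fun a i => M a (σ i) with hN
  -- the mod 2 reduction of N is invertible
  have hN2 : IsUnit ((N.map (Int.cast : ℤ → ZMod 2)).det) := by
    set N2 : Matrix (Fin m) (Fin m) (ZMod 2) := N.map (Int.cast : ℤ → ZMod 2) with hN2def
    have hrows : ∀ i : Fin m, N2ᵀ i = (e i : Fin m → ZMod 2) := by
      intro i
      funext a
      rw [← hσ i]
      simp [hN2def, hN, hg, Matrix.transpose_apply, Matrix.map_apply, Matrix.map, Matrix.of_apply]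
    have hli : LinearIndependent (ZMod 2) (fun i : Fin m => N2ᵀ i) := by
      have : LinearIndependent (ZMod 2) (fun i : Fin m => (B (e i) : Fin m → ZMod 2)) :=
        B.linearIndependent.comp e e.injective
      simpa [hrows, B, Module.Basis.mk_apply] using this
    have hinj : Function.Injective (N2ᵀ).vecMul := Matrix.vecMul_injective_iff.mpr hli
    have hU : IsUnit N2ᵀ := Matrix.vecMul_injective_iff_isUnit.mp hinj
    have := (Matrix.isUnit_iff_isUnit_det _).mp hU
    rwa [Matrix.det_transpose] at this
  have hdetN : N.det ≠ 0 := by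
    intro h0
    have hmap : ((N.det : ℤ) : ZMod 2) = (N.map (Int.cast : ℤ → ZMod 2)).det := by
      simpa [RingHom.mapMatrix_apply] using (Int.castRingHom (ZMod 2)).map_det N
    rw [h0] at hmap
    simp only [Int.cast_zero] at hmap
    rw [← hmap] at hN2
    exact hN2.ne_zero rfl
  -- the real matrix is invertible
  set Nr : Matrix (Fin m) (Fin m) ℝ := N.map (Int.cast : ℤ → ℝ) with hNr
  have hdetNr : Nr.det ≠ 0 := by
    have hmap : ((N.det : ℤ) : ℝ) = Nr.det := by
      simpa [RingHom.mapMatrix_apply, hNr] using (Int.castRingHom ℝ).map_det N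
    rw [← hmap]
    exact_mod_cast hdetN
  have hUr : IsUnit Nr := (Matrix.isUnit_iff_isUnit_det _).mpr (isUnit_iff_ne_zero.mpr hdetNr)
  have hsurjr : Function.Surjective Nr.mulVec := Matrix.mulVec_surjective_iff_isUnit.mpr hUr
  intro b
  obtain ⟨u, hu⟩ := hsurjr b
  refine ⟨fun j => ∑ i : Fin m, if σ i = j then u i else 0, fun a => ?_⟩
  have hswap : ∑ j, (M a j : ℝ) * ∑ i : Fin m, (if σ i = j then u i else 0)
      = ∑ i : Fin m, (M a (σ i) : ℝ) * u i := by
    simp_rw [Finset.mul_sum, mul_ite, mul_zero]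
    rw [Finset.sum_comm]
    refine Finset.sum_congr rfl fun i _ => ?_
    rw [Finset.sum_ite_eq Finset.univ (σ i) (fun j => (M a j : ℝ) * u i),
      if_pos (Finset.mem_univ _)]
  rw [hswap, ← hu]
  simp [hNr, hN, Matrix.mulVec, dotProduct, Matrix.map_apply, Matrix.map, Matrix.of_apply]

/-- If the mod-2 reduction of the root matrix `M` is surjective and the linear system
`Mᵀ X = (k,…,k)` has a solution with all entries nonzero, then there exists a diagonal
metric `g` whose associated vector `Y_a = c_a² ∏_j g_j^{M_{aj}}` solves `Mᵀ Y = (k,…,k)`;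
i.e. there is a diagonal Einstein metric with cosmological constant `k/2`. -/
theorem sufficient_condition_diagonal_einstein (m n : ℕ) (M : Matrix (Fin m) (Fin n) ℤ)
    (hsurj : Function.Surjective
      (fun v : Fin n → ZMod 2 => fun a : Fin m => ∑ j, (M a j : ZMod 2) * v j))
    (c : Fin m → ℝ) (hc : ∀ a, c a ≠ 0) (k : ℝ)
    (hX : ∃ X : Fin m → ℝ, (∀ a, X a ≠ 0) ∧ ∀ j, ∑ a, (M a j : ℝ) * X a = k) :
    ∃ g : Fin n → ℝ, (∀ j, g j ≠ 0) ∧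
      ∀ j', ∑ a, (M a j' : ℝ) * (c a ^ 2 * ∏ j, g j ^ M a j) = k := by
  classical
  obtain ⟨X, hXne, hXk⟩ := hX
  set τ : Fin m → ZMod 2 := fun a => if 0 < X a then 0 else 1 with hτ
  obtain ⟨s, hs⟩ := hsurj τ
  have hs' : ∀ a, ∑ j, (M a j : ZMod 2) * s j = τ a := fun a => congrFun hs a
  have hc2 : ∀ a, (0 : ℝ) < c a ^ 2 := fun a => by
    have := hc a; positivity
  set r : Fin m → ℝ := fun a => |X a| / c a ^ 2 with hr
  have hrpos : ∀ a, 0 < r a := fun a => div_pos (abs_pos.mpr (hXne a)) (hc2 a)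
  obtain ⟨t, ht⟩ := real_surjective_aux m n M hsurj (fun a => Real.log (r a))
  refine ⟨fun j => (-1 : ℝ) ^ (s j).val * Real.exp (t j), fun j => mul_ne_zero
    (pow_ne_zero _ (by norm_num)) (Real.exp_pos _).ne', ?_⟩
  intro j'
  have key : ∀ a, c a ^ 2 * ∏ j, ((-1 : ℝ) ^ (s j).val * Real.exp (t j)) ^ M a j = X a := by
    intro a
    have h1 : ∏ j, ((-1 : ℝ) ^ (s j).val * Real.exp (t j)) ^ M a j
        = (∏ j, ((-1 : ℝ) ^ (s j).val) ^ M a j) * ∏ j, (Real.exp (t j)) ^ M a j := by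
      rw [← Finset.prod_mul_distrib]
      exact Finset.prod_congr rfl fun j _ => mul_zpow _ _ _
    have hB : ∏ j, (Real.exp (t j)) ^ M a j = r a := by
      have hstep : ∀ j, (Real.exp (t j)) ^ M a j = Real.exp ((M a j : ℝ) * t j) := by
        intro j
        rw [← Real.rpow_intCast (Real.exp (t j)) (M a j),
          Real.rpow_def_of_pos (Real.exp_pos _), Real.log_exp, mul_comm]
      simp_rw [hstep, ← Real.exp_sum]
      rw [ht a, Real.exp_log (hrpos a)]
    have hA : ∏ j, ((-1 : ℝ) ^ (s j).val) ^ M a j = (-1 : ℝ) ^ (τ a).val := by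
      have h2 : ∀ j, ((-1 : ℝ) ^ (s j).val) ^ M a j
          = (-1 : ℝ) ^ (((s j).val : ℤ) * M a j) := by
        intro j
        rw [← zpow_natCast (-1 : ℝ) (s j).val, ← _root_.zpow_mul]
      have hcast : (((∑ j, ((s j).val : ℤ) * M a j : ℤ)) : ZMod 2) = τ a := by
        push_cast
        rw [← hs' a]
        refine Finset.sum_congr rfl fun j _ => ?_
        rw [ZMod.natCast_val, ZMod.cast_id, mul_comm]
      simp_rw [h2]
      rw [← zpow_finset_sum_aux (-1 : ℝ) (by norm_num), neg_one_zpow_eq_zmod_aux, hcast]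
    rw [h1, hA, hB]
    by_cases h : 0 < X a
    · have hτ0 : τ a = 0 := by simp [hτ, h]
      rw [hτ0, ZMod.val_zero, pow_zero, one_mul]
      simp only [hr]
      rw [mul_div_cancel₀ _ (hc2 a).ne']
      exact abs_of_pos h
    · have hτ1 : τ a = 1 := by simp [hτ, h]
      have hneg : X a < 0 := lt_of_le_of_ne (not_lt.mp h) (hXne a)
      rw [hτ1, ZMod.val_one, pow_one]
      simp only [hr]
      rw [abs_of_neg hneg]
      field_simp
      exact mul_div_cancel_left₀ (X a) (hc a)
  calc ∑ a, (M a j' : ℝ) * (c a ^ 2 * ∏ j, ((-1 : ℝ) ^ (s j).val * Real.exp (t j)) ^ M a j)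
      = ∑ a, (M a j' : ℝ) * X a := Finset.sum_congr rfl fun a _ => by rw [key a]
    _ = k := hXk j'
end

section
/- Let 𝔤 be a finite-dimensional real nilpotent Lie algebra and let B and B′ be nice bases of 𝔤 that are not equivalent. Let v = (0,1) ∈ 𝔤 × ℝ, where 𝔤 × ℝ is the product Lie algebra (with ℝ abelian). Then (B × {0}) ∪ {v} and (B′ × {0}) ∪ {v} are nice bases of 𝔤 × ℝ, and they are not equivalent. -/
attribute [local instance 100] LieRing.ofAssociativeRing

/-- The product Lie ring structure on `L × M`, with componentwise bracket. -/
instance prodLieRing {L M : Type} [LieRing L] [LieRing M] : LieRing (L × M) :=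
  { (inferInstance : AddCommGroup (L × M)) with
    bracket := fun p q => (⁅p.1, q.1⁆, ⁅p.2, q.2⁆)
    add_lie := fun x y z => Prod.ext (add_lie x.1 y.1 z.1) (add_lie x.2 y.2 z.2)
    lie_add := fun x y z => Prod.ext (lie_add x.1 y.1 z.1) (lie_add x.2 y.2 z.2)
    lie_self := fun x => Prod.ext (lie_self x.1) (lie_self x.2)
    leibniz_lie := fun x y z =>
      Prod.ext (leibniz_lie x.1 y.1 z.1) (leibniz_lie x.2 y.2 z.2) }

/-- The product Lie algebra structure on `L × M`. -/
instance prodLieAlgebra {L M : Type} [LieRing L] [LieRing M]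
    [LieAlgebra ℝ L] [LieAlgebra ℝ M] : LieAlgebra ℝ (L × M) :=
  { (inferInstance : Module ℝ (L × M)) with
    lie_smul := fun t x y => Prod.ext (lie_smul t x.1 y.1) (lie_smul t x.2 y.2) }

/-- Two bases of a Lie algebra are equivalent if some Lie algebra automorphism maps each
element of the first to a nonzero multiple of an element of the second. -/
def BasesEquivalent {L : Type} [LieRing L] [LieAlgebra ℝ L] {ι ι' : Type}
    (B : Module.Basis ι ℝ L) (B' : Module.Basis ι' ℝ L) : Prop :=
  ∃ φ : L ≃ₗ⁅ℝ⁆ L, ∀ i, ∃ (j : ι') (a : ℝ), a ≠ 0 ∧ φ (B i) = a • B' j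

lemma prod_lie_def {L : Type} [LieRing L] [LieAlgebra ℝ L] (p q : L × ℝ) :
    ⁅p, q⁆ = (⁅p.1, q.1⁆, 0) := by
  show (⁅p.1, q.1⁆, ⁅p.2, q.2⁆) = (⁅p.1, q.1⁆, (0:ℝ))
  rw [Ring.lie_def]; ring_nf

lemma pair_repr {L : Type} [LieRing L] [LieAlgebra ℝ L] {n : ℕ}
    (B : Module.Basis (Fin n) ℝ L) (E : Module.Basis (Fin (n + 1)) ℝ (L × ℝ))
    (hE1 : ∀ i : Fin n, E i.castSucc = (B i, 0)) (x : L) (m : Fin (n+1)) :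
    E.repr (x, 0) m = if h : m = Fin.last n then 0 else B.repr x (m.castPred h) := by
  have hx : ((x, (0:ℝ)) : L × ℝ) = ∑ i : Fin n, B.repr x i • E i.castSucc := by
    have : ∑ i : Fin n, B.repr x i • E i.castSucc
        = ((∑ i : Fin n, B.repr x i • B i : L), (0:ℝ)) := by
      rw [Prod.ext_iff]
      constructor
      · rw [Prod.fst_sum]; simp [hE1]
      · rw [Prod.snd_sum]; simp [hE1]
    rw [this, B.sum_repr]
  rw [hx, map_sum]
  simp only [map_smul, Module.Basis.repr_self, Finsupp.smul_single, smul_eq_mul, mul_one]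
  rw [Finsupp.finset_sum_apply]
  simp only [Finsupp.single_apply]
  split
  · next h => subst h
              apply Finset.sum_eq_zero
              intro i _
              simp [(Fin.castSucc_lt_last i).ne]
  · next h =>
      rw [Finset.sum_eq_single (m.castPred h)] <;> simp_all [Fin.castSucc_castPred]
      intro i hi hic
      subst hic
      simp [Fin.castPred_castSucc] at hi

lemma nice_ext {L : Type} [LieRing L] [LieAlgebra ℝ L] {n : ℕ}
    (B : Module.Basis (Fin n) ℝ L) (hB : IsNiceBasis B)
    (E : Module.Basis (Fin (n + 1)) ℝ (L × ℝ))
    (hE1 : ∀ i : Fin n, E i.castSucc = (B i, 0)) (hE2 : E (Fin.last n) = (0, 1)) :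
    IsNiceBasis E := by
  have hzero : ∀ (m : Fin (n+1)), ⁅E (Fin.last n), E m⁆ = 0 ∧ ⁅E m, E (Fin.last n)⁆ = 0 := by
    intro m
    constructor <;> rw [prod_lie_def, hE2] <;> simp [Prod.ext_iff]
  constructor
  · intro m j
    rcases eq_or_ne m (Fin.last n) with hm | hm
    · exact ⟨Fin.last n, 0, by rw [hm, (hzero j).1, zero_smul]⟩
    rcases eq_or_ne j (Fin.last n) with hj | hj
    · exact ⟨Fin.last n, 0, by rw [hj, (hzero m).2, zero_smul]⟩
    obtain ⟨i, rfl⟩ := Fin.exists_castSucc_eq.mpr hm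
    obtain ⟨u, rfl⟩ := Fin.exists_castSucc_eq.mpr hj
    obtain ⟨k, a, hk⟩ := hB.1 i u
    refine ⟨k.castSucc, a, ?_⟩
    rw [prod_lie_def, hE1, hE1, hE1]
    simp [Prod.ext_iff, hk]
  · intro m k j j' h1 h2
    rcases eq_or_ne m (Fin.last n) with hm | hm
    · rw [hm, (hzero j).1] at h1; simp at h1
    rcases eq_or_ne j (Fin.last n) with hj | hj
    · rw [hj, (hzero m).2] at h1; simp at h1
    rcases eq_or_ne j' (Fin.last n) with hj' | hj'
    · rw [hj', (hzero m).2] at h2; simp at h2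
    obtain ⟨i, rfl⟩ := Fin.exists_castSucc_eq.mpr hm
    obtain ⟨u, rfl⟩ := Fin.exists_castSucc_eq.mpr hj
    obtain ⟨u', rfl⟩ := Fin.exists_castSucc_eq.mpr hj'
    have hb1 : (⁅E i.castSucc, E u.castSucc⁆ : L × ℝ) = (⁅B i, B u⁆, 0) := by
      rw [prod_lie_def, hE1, hE1]
    have hb2 : (⁅E i.castSucc, E u'.castSucc⁆ : L × ℝ) = (⁅B i, B u'⁆, 0) := by
      rw [prod_lie_def, hE1, hE1]
    rw [hb1, pair_repr B E hE1] at h1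
    rw [hb2, pair_repr B E hE1] at h2
    rcases eq_or_ne k (Fin.last n) with hk | hk
    · rw [dif_pos hk] at h1; simp at h1
    rw [dif_neg hk] at h1
    rw [dif_neg hk] at h2
    have := hB.2 i (k.castPred hk) u u' h1 h2
    rw [this]

lemma build_equiv {L : Type} [LieRing L] [LieAlgebra ℝ L] {n : ℕ}
    (B B' : Module.Basis (Fin n) ℝ L) (w : L) (hw : ∀ z : L, ⁅z, w⁆ = 0)
    (f : L →ₗ[ℝ] L) (g : L →ₗ[ℝ] ℝ)
    (hf : ∀ x y : L, f ⁅x, y⁆ = ⁅f x, f y⁆) (hg : ∀ x y : L, g ⁅x, y⁆ = 0)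
    (τ : Fin n → Fin n) (hτ : Function.Injective τ) (b : Fin n → ℝ) (hb : ∀ i, b i ≠ 0)
    (hval : ∀ i, f (B i) + g (B i) • w = b i • B' (τ i)) :
    BasesEquivalent B B' := by
  have hw' : ∀ z : L, ⁅w, z⁆ = 0 := by
    intro z
    rw [← lie_skew, hw, neg_zero]
  set ψ : L →ₗ[ℝ] L := f + g.smulRight w with hψ
  have hψapp : ∀ x, ψ x = f x + g x • w := fun x => rfl
  have hψlie : ∀ x y : L, ψ ⁅x, y⁆ = ⁅ψ x, ψ y⁆ := by
    intro x y
    rw [hψapp, hψapp, hψapp, hf, hg, zero_smul, add_zero]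
    simp [lie_smul, smul_lie, hw, hw']
  have hsurj : Function.Surjective ψ := by
    rw [← LinearMap.range_eq_top, ← top_le_iff, ← B'.span_eq, Submodule.span_le]
    rintro x ⟨j, rfl⟩
    obtain ⟨i, rfl⟩ := (Finite.injective_iff_surjective.mp hτ) j
    refine ⟨(b i)⁻¹ • B i, ?_⟩
    rw [map_smul, hψapp, hval, smul_smul, inv_mul_cancel₀ (hb i), one_smul]
  haveI : FiniteDimensional ℝ L := B.finiteDimensional_of_finite
  have hbij : Function.Bijective ψ := ⟨LinearMap.injective_iff_surjective.mpr hsurj, hsurj⟩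
  refine ⟨LieEquiv.ofBijective ⟨ψ, by intro x y; exact hψlie x y⟩ hbij, fun i => ⟨τ i, b i, hb i, ?_⟩⟩
  show ψ (B i) = b i • B' (τ i)
  rw [hψapp, hval]

/-- Extending two inequivalent nice bases of `𝔤` by the central vector `(0,1)` gives two
inequivalent nice bases of `𝔤 × ℝ`. -/
theorem inequivalent_nice_bases_extend {L : Type} [LieRing L] [LieAlgebra ℝ L]
    [LieRing.IsNilpotent L] {n : ℕ}
    (B B' : Module.Basis (Fin n) ℝ L)
    (hB : IsNiceBasis B) (hB' : IsNiceBasis B')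
    (hneq : ¬ BasesEquivalent B B')
    (E E' : Module.Basis (Fin (n + 1)) ℝ (L × ℝ))
    (hE : (∀ i : Fin n, E i.castSucc = (B i, 0)) ∧ E (Fin.last n) = (0, 1))
    (hE' : (∀ i : Fin n, E' i.castSucc = (B' i, 0)) ∧ E' (Fin.last n) = (0, 1)) :
    IsNiceBasis E ∧ IsNiceBasis E' ∧ ¬ BasesEquivalent E E' := by
  obtain ⟨hE1, hE2⟩ := hE
  obtain ⟨hE'1, hE'2⟩ := hE'
  refine ⟨nice_ext B hB E hE1 hE2, nice_ext B' hB' E' hE'1 hE'2, ?_⟩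
  rintro ⟨φ, hφ⟩
  choose σ a ha hval using hφ
  -- σ is injective
  have key : ∀ m, E m = a m • φ.symm (E' (σ m)) := by
    intro m
    have := congrArg φ.symm (hval m)
    rw [LieEquiv.symm_apply_apply] at this
    exact this.trans (φ.symm.map_smul _ _)
  have hσ : Function.Injective σ := by
    intro m m' hmm
    by_contra hne
    have h1 := key m
    have h2 := key m'
    rw [hmm] at h1
    have h3 : (a m') • E m = (a m) • E m' := by
      rw [h1, h2, smul_smul, smul_smul, mul_comm]
    have h4 := congrArg (fun z => E.repr z m) h3
    simp only [map_smul, Module.Basis.repr_self, Finsupp.smul_apply, Finsupp.single_apply,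
      if_pos rfl, smul_eq_mul, mul_one] at h4
    rw [if_neg (Ne.symm hne)] at h4
    simp at h4
    exact (ha m') h4
  -- the component maps
  set f : L →ₗ[ℝ] L :=
    (LinearMap.fst ℝ L ℝ).comp (φ.toLinearEquiv.toLinearMap.comp (LinearMap.inl ℝ L ℝ)) with hfdef
  set g : L →ₗ[ℝ] ℝ :=
    (LinearMap.snd ℝ L ℝ).comp (φ.toLinearEquiv.toLinearMap.comp (LinearMap.inl ℝ L ℝ)) with hgdef
  have hfg : ∀ x : L, φ (x, 0) = (f x, g x) := by
    intro x
    simp [hfdef, hgdef]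
  have hbr : ∀ x y : L, ((⁅f x, f y⁆ : L), (0:ℝ)) = (f ⁅x, y⁆, g ⁅x, y⁆) := by
    intro x y
    rw [← hfg]
    have h5 : ((⁅x, y⁆ : L), (0:ℝ)) = ⁅((x, 0) : L × ℝ), ((y, 0) : L × ℝ)⁆ := by
      rw [prod_lie_def]
    rw [h5, LieEquiv.map_lie, hfg x, hfg y, prod_lie_def]
  have hf : ∀ x y : L, f ⁅x, y⁆ = ⁅f x, f y⁆ := fun x y =>
    ((Prod.mk.injEq _ _ _ _ ▸ hbr x y).1).symm
  have hg : ∀ x y : L, g ⁅x, y⁆ = 0 := fun x y =>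
    ((Prod.mk.injEq _ _ _ _ ▸ hbr x y).2).symm
  have hcsne : ∀ i : Fin n, (i.castSucc : Fin (n+1)) ≠ Fin.last n :=
    fun i => (Fin.castSucc_lt_last i).ne
  by_cases hA : σ (Fin.last n) = Fin.last n
  · -- good case: w = 0
    have hne : ∀ i : Fin n, σ i.castSucc ≠ Fin.last n :=
      fun i h => (hcsne i) (hσ (h.trans hA.symm))
    set τ : Fin n → Fin n := fun i => (σ i.castSucc).castPred (hne i) with hτdef
    have hτ : Function.Injective τ := by
      intro i i' h
      have : σ i.castSucc = σ i'.castSucc := by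
        have := congrArg Fin.castSucc h
        simpa [hτdef, Fin.castSucc_castPred] using this
      exact Fin.castSucc_injective n (hσ this)
    have hvals : ∀ i, f (B i) + g (B i) • (0:L) = a i.castSucc • B' (τ i) := by
      intro i
      have h6 : φ (B i, 0) = (a i.castSucc • B' (τ i), 0) := by
        rw [← hE1, hval, hτdef]
        have : E' (σ i.castSucc) = (B' ((σ i.castSucc).castPred (hne i)), 0) := by
          rw [← hE'1, Fin.castSucc_castPred]
        rw [this, Prod.smul_mk, smul_zero]
      rw [hfg, Prod.mk.injEq] at h6
      rw [smul_zero, add_zero, h6.1]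
    exact hneq (build_equiv B B' 0 (fun z => lie_zero z) f g hf hg τ hτ
      (fun i => a i.castSucc) (fun i => ha i.castSucc) hvals)
  · -- bad case: σ last = j0.castSucc
    set j0 : Fin n := (σ (Fin.last n)).castPred hA with hj0def
    have hj0 : σ (Fin.last n) = j0.castSucc := (Fin.castSucc_castPred _ _).symm
    have hlastval : φ ((0:L), (1:ℝ)) = (a (Fin.last n) • B' j0, 0) := by
      rw [← hE2, hval, hj0, hE'1, Prod.smul_mk, smul_zero]
    have hw : ∀ z : L, ⁅z, B' j0⁆ = 0 := by
      intro z
      have h7 : (⁅((z,0) : L × ℝ), φ ((0:L), (1:ℝ))⁆ : L × ℝ) = 0 := by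
        have h8 : (⁅φ.symm (z, 0), (((0:L), (1:ℝ)) : L × ℝ)⁆ : L × ℝ) = 0 := by
          rw [prod_lie_def]
          simp
        calc (⁅((z,0) : L × ℝ), φ ((0:L), (1:ℝ))⁆ : L × ℝ)
            = ⁅φ (φ.symm (z, 0)), φ ((0:L), (1:ℝ))⁆ := by rw [LieEquiv.apply_symm_apply]
          _ = φ ⁅φ.symm (z, 0), (((0:L), (1:ℝ)) : L × ℝ)⁆ := by rw [LieEquiv.map_lie]
          _ = 0 := by rw [h8]; exact φ.map_zero
      rw [hlastval, prod_lie_def] at h7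
      simp only [lie_smul] at h7
      have h9 : a (Fin.last n) • ⁅z, B' j0⁆ = 0 := by
        rw [Prod.ext_iff] at h7
        simpa using h7.1
      exact (smul_eq_zero.mp h9).resolve_left (ha (Fin.last n))
    set τ : Fin n → Fin n := fun i =>
      if h : σ i.castSucc = Fin.last n then j0 else (σ i.castSucc).castPred h with hτdef
    have hτ : Function.Injective τ := by
      intro i i' h
      by_cases h1 : σ i.castSucc = Fin.last n <;> by_cases h2 : σ i'.castSucc = Fin.last n
      · exact Fin.castSucc_injective n (hσ (h1.trans h2.symm))
      · exfalso
        rw [hτdef] at h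
        simp only [dif_pos h1, dif_neg h2] at h
        have : σ (Fin.last n) = σ i'.castSucc := by
          rw [hj0, h, Fin.castSucc_castPred]
        exact (hcsne i') (hσ this).symm
      · exfalso
        rw [hτdef] at h
        simp only [dif_neg h1, dif_pos h2] at h
        have : σ (Fin.last n) = σ i.castSucc := by
          rw [hj0, ← h, Fin.castSucc_castPred]
        exact (hcsne i) (hσ this).symm
      · rw [hτdef] at h
        simp only [dif_neg h1, dif_neg h2] at h
        have : σ i.castSucc = σ i'.castSucc := by
          rw [← Fin.castSucc_castPred (σ i.castSucc) h1, h, Fin.castSucc_castPred]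
        exact Fin.castSucc_injective n (hσ this)
    have hvals : ∀ i, f (B i) + g (B i) • B' j0 = a i.castSucc • B' (τ i) := by
      intro i
      by_cases h1 : σ i.castSucc = Fin.last n
      · have h6 : φ (B i, 0) = ((0:L), a i.castSucc) := by
          rw [← hE1, hval, h1, hE'2, Prod.smul_mk, smul_zero]
          simp
        rw [hfg, Prod.mk.injEq] at h6
        rw [h6.1, h6.2, zero_add, hτdef]
        simp only [dif_pos h1]
      · have h6 : φ (B i, 0) = (a i.castSucc • B' ((σ i.castSucc).castPred h1), 0) := by
          rw [← hE1, hval]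
          have : E' (σ i.castSucc) = (B' ((σ i.castSucc).castPred h1), 0) := by
            rw [← hE'1, Fin.castSucc_castPred]
          rw [this, Prod.smul_mk, smul_zero]
        rw [hfg, Prod.mk.injEq] at h6
        rw [h6.1, h6.2, zero_smul, add_zero, hτdef]
        simp only [dif_neg h1]
    exact hneq (build_equiv B B' (B' j0) hw f g hf hg τ hτ
      (fun i => a i.castSucc) (fun i => ha i.castSucc) hvals)
end

section
/- For every positive integer n there exists a real nilpotent Lie algebra 𝔥 of dimension 6n admitting at least n+1 pairwise inequivalent nice bases. -/
noncomputable section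

namespace NB

/-- bracket on a single 6-dim copy: coordinates (x1,y1,z1,x2,y2,z2) -/
def hbr (u v : Fin 6 → ℝ) : Fin 6 → ℝ := fun k =>
  if k = 2 then u 0 * v 1 - u 1 * v 0
  else if k = 5 then u 3 * v 4 - u 4 * v 3 else 0

lemma hbr_add_left (u v w : Fin 6 → ℝ) : hbr (u + v) w = hbr u w + hbr v w := by
  funext k; simp only [hbr, Pi.add_apply]; split_ifs <;> ring

lemma hbr_add_right (u v w : Fin 6 → ℝ) : hbr u (v + w) = hbr u v + hbr u w := by
  funext k; simp only [hbr, Pi.add_apply]; split_ifs <;> ring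

lemma hbr_self (u : Fin 6 → ℝ) : hbr u u = 0 := by
  funext k; simp only [hbr, Pi.zero_apply]; split_ifs <;> ring

lemma hbr_smul_right (a : ℝ) (u v : Fin 6 → ℝ) : hbr u (a • v) = a • hbr u v := by
  funext k; simp only [hbr, Pi.smul_apply, smul_eq_mul]; split_ifs <;> ring

/-- the bracket output is "central": bracketing with it gives 0 -/
lemma hbr_central (u v w : Fin 6 → ℝ) : hbr u (hbr v w) = 0 := by
  funext k; fin_cases k <;> simp [hbr]

lemma hbr_central' (u v w : Fin 6 → ℝ) : hbr (hbr v w) u = 0 := by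
  funext k; fin_cases k <;> simp [hbr]

def LL (n : ℕ) : Type := Fin n → Fin 6 → ℝ

instance (n) : AddCommGroup (LL n) := inferInstanceAs (AddCommGroup (Fin n → Fin 6 → ℝ))
instance (n) : Module ℝ (LL n) := inferInstanceAs (Module ℝ (Fin n → Fin 6 → ℝ))

variable {n : ℕ}

lemma LL_add_apply (u v : LL n) (p : Fin n) : (u + v) p = u p + v p := rfl
lemma LL_smul_apply (a : ℝ) (u : LL n) (p : Fin n) : (a • u) p = a • u p := rfl
lemma LL_zero_apply (p : Fin n) : (0 : LL n) p = 0 := rfl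

def brLL (u v : LL n) : LL n := fun p => hbr (u p) (v p)

lemma brLL_apply (u v : LL n) (p : Fin n) : brLL u v p = hbr (u p) (v p) := rfl

instance : LieRing (LL n) where
  bracket := brLL
  add_lie u v w := by
    funext p
    show hbr ((u + v) p) (w p) = hbr (u p) (w p) + hbr (v p) (w p)
    rw [LL_add_apply, hbr_add_left]
  lie_add u v w := by
    funext p
    show hbr (u p) ((v + w) p) = hbr (u p) (v p) + hbr (u p) (w p)
    rw [LL_add_apply, hbr_add_right]
  lie_self u := by
    funext p
    show hbr (u p) (u p) = (0 : Fin 6 → ℝ)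
    rw [hbr_self]
  leibniz_lie u v w := by
    funext p
    show hbr (u p) (hbr (v p) (w p))
        = hbr (hbr (u p) (v p)) (w p) + hbr (v p) (hbr (u p) (w p))
    rw [hbr_central, hbr_central, hbr_central']
    simp

instance : LieAlgebra ℝ (LL n) where
  lie_smul a u v := by
    funext p
    show hbr (u p) ((a • v) p) = (a • brLL u v) p
    rw [LL_smul_apply, LL_smul_apply, hbr_smul_right]
    rfl

lemma lie_def (u v : LL n) (p : Fin n) : ⁅u, v⁆ p = hbr (u p) (v p) := rfl

lemma triple_lie (x y z : LL n) : ⁅x, ⁅y, z⁆⁆ = 0 := by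
  funext p; rw [lie_def, lie_def, hbr_central]; rfl

theorem LL_nilpotent (n : ℕ) : LieRing.IsNilpotent (LL n) := by
  refine (LieModule.isNilpotent_iff (R := ℝ) (L := LL n) (M := LL n)).mpr ?_
  refine ⟨2, ?_⟩
  rw [eq_bot_iff]
  have h1 : LieModule.lowerCentralSeries ℝ (LL n) (LL n) 1 ≤ LieAlgebra.center ℝ (LL n) := by
    rw [LieModule.lowerCentralSeries_succ, LieModule.lowerCentralSeries_zero, LieSubmodule.lie_le_iff]
    intro x _ m _
    intro y
    exact triple_lie y x m
  calc LieModule.lowerCentralSeries ℝ (LL n) (LL n) 2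
      = ⁅(⊤ : LieIdeal ℝ (LL n)), LieModule.lowerCentralSeries ℝ (LL n) (LL n) 1⁆ := by
        rw [LieModule.lowerCentralSeries_succ]
    _ ≤ ⁅(⊤ : LieIdeal ℝ (LL n)), LieAlgebra.center ℝ (LL n)⁆ :=
        LieSubmodule.mono_lie_right _ h1
    _ ≤ ⊥ := by
        rw [LieSubmodule.lie_le_iff]
        intro x _ m hm
        simp only [LieSubmodule.mem_bot]
        exact hm x
/-! ### Per-copy vectors and structure constants -/

def avec : Fin 6 → Fin 6 → ℝ := fun j => Pi.single j 1

def bvec : Fin 6 → Fin 6 → ℝ := fun j =>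
  match j with
  | 0 => avec 0 + avec 3
  | 1 => avec 0 - avec 3
  | 2 => avec 1 + avec 4
  | 3 => avec 1 - avec 4
  | 4 => avec 2 + avec 5
  | 5 => avec 2 - avec 5

/-- structure constants for the standard basis -/
def cA : Fin 6 → Fin 6 → ℤ := fun i j =>
  match i, j with
  | 0, 1 => 1 | 1, 0 => -1 | 3, 4 => 1 | 4, 3 => -1 | _, _ => 0

def fA : Fin 6 → Fin 6 → Fin 6 := fun i j =>
  match i, j with
  | 0, 1 => 2 | 1, 0 => 2 | 3, 4 => 5 | 4, 3 => 5 | _, _ => 0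

def cB : Fin 6 → Fin 6 → ℤ := fun i j =>
  match i, j with
  | 0, 2 => 1 | 0, 3 => 1 | 1, 2 => 1 | 1, 3 => 1
  | 2, 0 => -1 | 3, 0 => -1 | 2, 1 => -1 | 3, 1 => -1
  | _, _ => 0

def fB : Fin 6 → Fin 6 → Fin 6 := fun i j =>
  match i, j with
  | 0, 2 => 4 | 0, 3 => 5 | 1, 2 => 5 | 1, 3 => 4
  | 2, 0 => 4 | 3, 0 => 5 | 2, 1 => 5 | 3, 1 => 4
  | _, _ => 0

lemma hbr_eq (u v : Fin 6 → ℝ) :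
    hbr u v = (u 0 * v 1 - u 1 * v 0) • avec 2 + (u 3 * v 4 - u 4 * v 3) • avec 5 := by
  funext k
  simp only [hbr, avec, Pi.add_apply, Pi.smul_apply, Pi.single_apply, smul_eq_mul]
  by_cases h2 : k = 2 <;> by_cases h5 : k = 5 <;> simp_all 

lemma hA : ∀ i j, hbr (avec i) (avec j) = (cA i j : ℝ) • avec (fA i j) := by
  intro i j
  fin_cases i <;> fin_cases j <;>
    simp [hbr_eq, avec, cA, fA, Pi.single_apply] 

lemma hB : ∀ i j, hbr (bvec i) (bvec j) = (cB i j : ℝ) • bvec (fB i j) := by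
  intro i j
  fin_cases i <;> fin_cases j <;>
    simp [hbr_eq, bvec, avec, cB, fB, Pi.single_apply, Pi.add_apply, Pi.sub_apply] <;>
    module

lemma h2A : ∀ (i k j j' : Fin 6),
    (cA i j ≠ 0 ∧ fA i j = k) → (cA i j' ≠ 0 ∧ fA i j' = k) → j = j' := by decide

lemma h2B : ∀ (i k j j' : Fin 6),
    (cB i j ≠ 0 ∧ fB i j = k) → (cB i j' ≠ 0 ∧ fB i j' = k) → j = j' := by decide
/-! ### Embeddings of single copies -/

def emb (p : Fin n) (w : Fin 6 → ℝ) : LL n := fun q => if q = p then w else 0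

lemma emb_apply (p : Fin n) (w : Fin 6 → ℝ) (q : Fin n) :
    emb p w q = if q = p then w else 0 := rfl

lemma hbr_zero_left (v : Fin 6 → ℝ) : hbr 0 v = 0 := by
  funext k; simp [hbr]

lemma hbr_zero_right (v : Fin 6 → ℝ) : hbr v 0 = 0 := by
  funext k; simp [hbr]

lemma lie_emb_same (p : Fin n) (u v : Fin 6 → ℝ) :
    ⁅emb p u, emb p v⁆ = emb p (hbr u v) := by
  funext q
  rw [lie_def, emb_apply, emb_apply, emb_apply]
  by_cases h : q = p
  · simp [h]
  · simp [h, hbr_zero_left]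

lemma lie_emb_ne {p q : Fin n} (h : q ≠ p) (u v : Fin 6 → ℝ) :
    ⁅emb p u, emb q v⁆ = 0 := by
  funext r
  rw [lie_def, emb_apply, emb_apply]
  by_cases h1 : r = p
  · have hpq : p ≠ q := fun e => h e.symm
    have hpq' : ¬ (p = q) := hpq
    simp [h1, hpq', hbr_zero_right, LL_zero_apply]
  · simp [h1, hbr_zero_left, LL_zero_apply]

lemma emb_smul (p : Fin n) (a : ℝ) (w : Fin 6 → ℝ) :
    emb p (a • w) = a • emb p w := by
  funext q
  rw [LL_smul_apply, emb_apply, emb_apply]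
  by_cases h : q = p <;> simp [h]

/-- the linear map version of `emb` -/
def embL (p : Fin n) : (Fin 6 → ℝ) →ₗ[ℝ] LL n where
  toFun := emb p
  map_add' u v := by
    funext q
    rw [LL_add_apply, emb_apply, emb_apply, emb_apply]
    by_cases h : q = p <;> simp [h]
  map_smul' a w := by simpa using emb_smul p a w

lemma embL_apply (p : Fin n) (w : Fin 6 → ℝ) : embL p w = emb p w := rfl

lemma embL_injective (p : Fin n) : Function.Injective (embL p) := by
  intro u v h
  have := congrFun h p
  simpa [embL_apply, emb_apply] using this

/-! ### The bases -/

def brep (u : Fin 6 → ℝ) : Fin 6 → ℝ := fun j =>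
  match j with
  | 0 => (u 0 + u 3) / 2
  | 1 => (u 0 - u 3) / 2
  | 2 => (u 1 + u 4) / 2
  | 3 => (u 1 - u 4) / 2
  | 4 => (u 2 + u 5) / 2
  | 5 => (u 2 - u 5) / 2

lemma brep_bvec_sum (u : Fin 6 → ℝ) : ∑ j, brep u j • bvec j = u := by
  funext k
  rw [Fin.sum_univ_six]
  fin_cases k <;>
    simp [brep, bvec, avec, Pi.single_apply, Pi.add_apply, Pi.sub_apply] <;> ring

lemma brep_sum (v : Fin 6 → ℝ) (j : Fin 6) : brep (∑ l, v l • bvec l) j = v j := by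
  have h : ∀ k, (∑ l, v l • bvec l) k = ∑ l, v l * bvec l k := by
    intro k
    rw [Finset.sum_apply]
    simp
  fin_cases j <;>
    simp [brep, h, Fin.sum_univ_six, bvec, avec, Pi.single_apply, Pi.add_apply,
      Pi.sub_apply] <;> ring

/-- The basis-defining equivalence for marker `m`: copies `p < m` carry the standard
basis, copies `p ≥ m` carry the mixed basis. -/
def S (m : ℕ) : LL n ≃ₗ[ℝ] (Fin n × Fin 6 → ℝ) where
  toFun u := fun x => if (x.1 : ℕ) < m then u x.1 x.2 else brep (u x.1) x.2
  invFun v := fun p => if (p : ℕ) < m then (fun k => v (p, k)) else ∑ l, v (p, l) • bvec l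
  map_add' u v := by
    funext x
    rw [Pi.add_apply]
    rcases x with ⟨p, j⟩
    dsimp only
    rw [LL_add_apply]
    by_cases h : (p : ℕ) < m
    · simp [h]
    · simp only [h, if_false, Pi.add_apply]
      fin_cases j <;> simp [brep] <;> ring
  map_smul' a u := by
    funext x
    rcases x with ⟨p, j⟩
    dsimp only
    rw [LL_smul_apply]
    by_cases h : (p : ℕ) < m
    · simp [h]
    · simp only [h, if_false, Pi.smul_apply, smul_eq_mul]
      fin_cases j <;> simp [brep] <;> ring
  left_inv u := by
    funext p k
    by_cases h : (p : ℕ) < m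
    · simp [h]
    · simp only [h, if_false]
      rw [congrFun (brep_bvec_sum (u p)) k]
  right_inv v := by
    funext x
    rcases x with ⟨p, j⟩
    by_cases h : (p : ℕ) < m
    · simp [h]
    · simp only [h, if_false]
      rw [brep_sum]
/-! ### Generic niceness lemmas -/

lemma nice_of_tables {L : Type} [LieRing L] [LieAlgebra ℝ L] {ι : Type} (B : Module.Basis ι ℝ L)
    (c : ι → ι → ℤ) (f : ι → ι → ι)
    (h : ∀ i j, ⁅B i, B j⁆ = (c i j : ℝ) • B (f i j))
    (h2 : ∀ i k j j', (c i j ≠ 0 ∧ f i j = k) → (c i j' ≠ 0 ∧ f i j' = k) → j = j') :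
    IsNiceBasis B := by
  classical
  constructor
  · exact fun i j => ⟨f i j, (c i j : ℝ), h i j⟩
  · intro i k j j' hj hj'
    rw [h i j, map_smul, B.repr_self] at hj
    rw [h i j', map_smul, B.repr_self] at hj'
    simp only [Finsupp.smul_apply, Finsupp.single_apply, smul_eq_mul] at hj hj'
    by_cases hf : f i j = k
    · by_cases hf' : f i j' = k
      · refine h2 i k j j' ⟨?_, hf⟩ ⟨?_, hf'⟩
        · intro hc; rw [hf, if_pos rfl, hc] at hj; simp at hj
        · intro hc; rw [hf', if_pos rfl, hc] at hj'; simp at hj'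
      · exfalso; rw [if_neg hf'] at hj'; simp at hj'
    · exfalso; rw [if_neg hf] at hj; simp at hj

lemma nice_reindex {L : Type} [LieRing L] [LieAlgebra ℝ L] {ι ι' : Type}
    (B : Module.Basis ι ℝ L) (e : ι ≃ ι') (h : IsNiceBasis B) : IsNiceBasis (B.reindex e) := by
  obtain ⟨h1, h2⟩ := h
  constructor
  · intro i j
    rw [Module.Basis.reindex_apply, Module.Basis.reindex_apply]
    obtain ⟨k, a, hk⟩ := h1 (e.symm i) (e.symm j)
    exact ⟨e k, a, by rw [Module.Basis.reindex_apply, Equiv.symm_apply_apply, hk]⟩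
  · intro i k j j' hj hj'
    rw [Module.Basis.reindex_apply, Module.Basis.reindex_apply, Module.Basis.repr_reindex_apply] at hj hj'
    have := h2 (e.symm i) (e.symm k) (e.symm j) (e.symm j') hj hj'
    exact e.symm.injective this

/-! ### The bases of `LL n` and their structure constants -/

def W (m : ℕ) (p : Fin n) : Fin 6 → (Fin 6 → ℝ) := if (p : ℕ) < m then avec else bvec

def BM (n m : ℕ) : Module.Basis (Fin n × Fin 6) ℝ (LL n) := Module.Basis.ofEquivFun (S m)

lemma S_symm_apply (m : ℕ) (v : Fin n × Fin 6 → ℝ) (p : Fin n) :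
    (S m).symm v p
      = if (p : ℕ) < m then (fun k => v (p, k)) else ∑ l, v (p, l) • bvec l := rfl

lemma BM_apply (m : ℕ) (p : Fin n) (j : Fin 6) :
    BM n m (p, j) = emb p (W m p j) := by
  classical
  have h0 : BM n m (p, j) = (S m).symm (Pi.single (p, j) 1) := by
    rw [BM, Module.Basis.coe_ofEquivFun]
  rw [h0]
  funext q
  rw [emb_apply, S_symm_apply]
  by_cases hq : q = p
  · subst hq
    by_cases hm : (q : ℕ) < m
    · rw [if_pos hm, if_pos rfl]
      simp only [W, hm, if_true]
      funext k
      simp [Pi.single_apply, Prod.ext_iff, avec, eq_comm]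
    · rw [if_neg hm, if_pos rfl]
      simp only [W, hm, if_false]
      have h1 : ∀ l : Fin 6, (Pi.single (q, j) (1:ℝ) : Fin n × Fin 6 → ℝ) (q, l) = if l = j then 1 else 0 := by
        intro l; simp [Pi.single_apply, Prod.ext_iff]
      simp only [h1, ite_smul, one_smul, zero_smul]
      rw [Finset.sum_ite_eq' Finset.univ j bvec]
      simp
  · have h1 : ∀ l : Fin 6, (Pi.single (p, j) (1:ℝ) : Fin n × Fin 6 → ℝ) (q, l) = 0 := by
      intro l; simp [Pi.single_apply, Prod.ext_iff, hq]
    rw [if_neg hq]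
    by_cases hm : (q : ℕ) < m
    · rw [if_pos hm]; funext k; simp [h1]
    · rw [if_neg hm]; simp [h1]

def cT (m : ℕ) (x y : Fin n × Fin 6) : ℤ :=
  if x.1 = y.1 then (if (x.1 : ℕ) < m then cA x.2 y.2 else cB x.2 y.2) else 0

def fT (m : ℕ) (x y : Fin n × Fin 6) : Fin n × Fin 6 :=
  (x.1, if x.1 = y.1 then (if (x.1 : ℕ) < m then fA x.2 y.2 else fB x.2 y.2) else 0)

lemma hT (m : ℕ) : ∀ x y, ⁅BM n m x, BM n m y⁆ = (cT m x y : ℝ) • BM n m (fT m x y) := by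
  rintro ⟨p, i⟩ ⟨q, j⟩
  rw [BM_apply, BM_apply]
  by_cases hpq : p = q
  · subst hpq
    rw [lie_emb_same]
    simp only [cT, fT]
    rw [BM_apply]
    simp only [W, if_pos rfl]
    by_cases hm : (p : ℕ) < m
    · simp only [if_pos hm]
      rw [hA, emb_smul]; simp
    · simp only [if_neg hm]
      rw [hB, emb_smul]; simp
  · have hqp : q ≠ p := fun e => hpq e.symm
    rw [lie_emb_ne hqp, cT, fT]
    simp only [if_neg hpq]
    rw [Int.cast_zero, zero_smul]

lemma h2T (m : ℕ) : ∀ (x k y y' : Fin n × Fin 6),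
    (cT m x y ≠ 0 ∧ fT m x y = k) → (cT m x y' ≠ 0 ∧ fT m x y' = k) → y = y' := by
  rintro ⟨p, i⟩ ⟨r, k⟩ ⟨q, j⟩ ⟨q', j'⟩ ⟨hc, hf⟩ ⟨hc', hf'⟩
  by_cases hpq : p = q
  · by_cases hpq' : p = q'
    · subst hpq; subst hpq'
      rw [cT] at hc hc'
      simp only [if_pos rfl] at hc hc'
      rw [fT] at hf hf'
      simp only [if_pos rfl] at hf hf'
      have hk : (p : Fin n) = r := congrArg Prod.fst hf
      have hfj := congrArg Prod.snd hf
      have hfj' := congrArg Prod.snd hf'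
      simp only at hfj hfj'
      by_cases hm : (p : ℕ) < m
      · rw [if_pos hm] at hc hc' hfj hfj'
        have := h2A i k j j' ⟨hc, hfj⟩ ⟨hc', hfj'⟩
        rw [this]
      · rw [if_neg hm] at hc hc' hfj hfj'
        have := h2B i k j j' ⟨hc, hfj⟩ ⟨hc', hfj'⟩
        rw [this]
    · exact absurd (by rw [cT, if_neg hpq']) hc'
  · exact absurd (by rw [cT, if_neg hpq]) hc

theorem nice_BM (m : ℕ) : IsNiceBasis (BM n m) :=
  nice_of_tables _ (cT m) (fT m) (hT m) (h2T m)
/-! ### The invariant: "ad has rank at least 2" -/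

def Pd {L : Type} [LieRing L] [LieAlgebra ℝ L] (v : L) : Prop :=
  ∃ x y : L, LinearIndependent ℝ ![⁅v, x⁆, ⁅v, y⁆]

section Invariant

variable {L : Type} [LieRing L] [LieAlgebra ℝ L]

lemma Pd_map (φ : L ≃ₗ⁅ℝ⁆ L) (v : L) (h : Pd v) : Pd (φ v) := by
  obtain ⟨x, y, hxy⟩ := h
  refine ⟨φ x, φ y, ?_⟩
  have he : ![⁅φ v, φ x⁆, ⁅φ v, φ y⁆] = ⇑φ.toLinearEquiv ∘ ![⁅v, x⁆, ⁅v, y⁆] := by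
    funext i
    fin_cases i <;>
      simp [← LieEquiv.map_lie φ]
  rw [he]
  exact hxy.map' φ.toLinearEquiv.toLinearMap
    (LinearMap.ker_eq_bot.mpr φ.toLinearEquiv.injective)

lemma Pd_smul {a : ℝ} (ha : a ≠ 0) (v : L) (h : Pd v) : Pd (a • v) := by
  obtain ⟨x, y, hxy⟩ := h
  refine ⟨x, y, ?_⟩
  have he : ![⁅a • v, x⁆, ⁅a • v, y⁆] = (fun _ => Units.mk0 a ha : Fin 2 → ℝˣ) • ![⁅v, x⁆, ⁅v, y⁆] := by
    funext i
    fin_cases i <;> simp [smul_lie, Units.smul_def]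
  rw [he]
  exact hxy.units_smul _

lemma Pd_smul_iff {a : ℝ} (ha : a ≠ 0) (v : L) : Pd (a • v) ↔ Pd v := by
  constructor
  · intro h
    have := Pd_smul (inv_ne_zero ha) _ h
    rwa [smul_smul, inv_mul_cancel₀ ha, one_smul] at this
  · exact Pd_smul ha v

lemma Pd_map_iff (φ : L ≃ₗ⁅ℝ⁆ L) (v : L) : Pd (φ v) ↔ Pd v := by
  constructor
  · intro h
    have := Pd_map φ.symm _ h
    rwa [LieEquiv.symm_apply_apply] at this
  · exact Pd_map φ v

/-- the key count lemma: equivalent bases have matching invariant counts -/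
lemma count_eq_of_equivalent {N : ℕ} (B B' : Module.Basis (Fin N) ℝ L)
    (h : BasesEquivalent B B') :
    Nat.card {i // Pd (B i)} = Nat.card {i // Pd (B' i)} := by
  classical
  obtain ⟨φ, hφ⟩ := h
  choose σ a hh using hφ
  have ha : ∀ i, a i ≠ 0 := fun i => (hh i).1
  have hmap : ∀ i, φ (B i) = a i • B' (σ i) := fun i => (hh i).2
  have hinj : Function.Injective σ := by
    intro i1 i2 he
    by_contra hne
    have h1 : φ (B i1) = (a i1 / a i2) • φ (B i2) := by
      rw [hmap, hmap, he, smul_smul, div_mul_cancel₀ _ (ha i2)]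
    have h2 : B i1 = (a i1 / a i2) • B i2 := by
      apply φ.injective
      show φ (B i1) = φ ((a i1 / a i2) • B i2)
      rw [h1]
      exact (map_smul φ.toLieHom _ _).symm
    have h3 := congrArg (fun z => B.repr z i1) h2
    simp only [map_smul, B.repr_self, Finsupp.smul_apply, Finsupp.single_apply,
      smul_eq_mul] at h3
    rw [if_neg (fun hx : i2 = i1 => hne hx.symm)] at h3
    simp at h3
  have hbij : Function.Bijective σ := Finite.injective_iff_bijective.mp hinj
  have hPd : ∀ i, Pd (B i) ↔ Pd (B' (σ i)) := by
    intro i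
    have h4 : Pd (B i) ↔ Pd (φ (B i)) := (Pd_map_iff φ _).symm
    rw [hmap i, Pd_smul_iff (ha i)] at h4
    exact h4
  exact Nat.card_congr (Equiv.subtypeEquiv (Equiv.ofBijective σ hbij) hPd)

end Invariant
/-! ### Computing the invariant for our basis vectors -/

def Pd0 (w : Fin 6 → ℝ) : Prop :=
  ∃ x y : Fin 6 → ℝ, LinearIndependent ℝ ![hbr w x, hbr w y]

lemma lie_emb_left (p : Fin n) (w : Fin 6 → ℝ) (x : LL n) :
    ⁅emb p w, x⁆ = emb p (hbr w (x p)) := by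
  funext q
  rw [lie_def, emb_apply, emb_apply]
  by_cases h : q = p
  · subst h; simp
  · simp [h, hbr_zero_left]

lemma Pd_emb_iff (p : Fin n) (w : Fin 6 → ℝ) : Pd (emb p w) ↔ Pd0 w := by
  constructor
  · rintro ⟨x, y, hxy⟩
    refine ⟨x p, y p, ?_⟩
    apply LinearIndependent.of_comp (embL p)
    have he : ⇑(embL p) ∘ ![hbr w (x p), hbr w (y p)] = ![⁅emb p w, x⁆, ⁅emb p w, y⁆] := by
      funext i
      fin_cases i <;> simp [embL_apply, lie_emb_left]
    rw [he]
    exact hxy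
  · rintro ⟨x, y, hxy⟩
    refine ⟨emb p x, emb p y, ?_⟩
    have he : ![⁅emb p w, emb p x⁆, ⁅emb p w, emb p y⁆]
        = ⇑(embL p) ∘ ![hbr w x, hbr w y] := by
      funext i
      fin_cases i <;> simp [embL_apply, lie_emb_same]
    rw [he]
    exact hxy.map' (embL p) (LinearMap.ker_eq_bot.mpr (embL_injective p))

lemma not_indep_colinear (u0 u1 : Fin 6 → ℝ) (c d : ℝ) :
    ¬ LinearIndependent ℝ ![c • u0, d • u0] := by
  intro h
  rcases eq_or_ne c 0 with rfl | hc
  · exact h.ne_zero 0 (by simp)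
  · obtain ⟨h1, h2⟩ := LinearIndependent.pair_iff.mp h d (-c)
      (by rw [smul_smul, smul_smul, ← add_smul]; ring_nf; simp)
    exact hc (neg_eq_zero.mp h2)

lemma notPd0 (w u0 : Fin 6 → ℝ) (hall : ∀ x, ∃ c : ℝ, hbr w x = c • u0) : ¬ Pd0 w := by
  rintro ⟨x, y, h⟩
  obtain ⟨c, hc⟩ := hall x
  obtain ⟨d, hd⟩ := hall y
  rw [hc, hd] at h
  exact not_indep_colinear u0 u0 c d h
lemma notPd0_avec (j : Fin 6) : ¬ Pd0 (avec j) := by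
  fin_cases j
  · exact notPd0 _ (avec 2) (fun x => ⟨x 1, by
      rw [hbr_eq]; simp [avec, Pi.single_apply]⟩)
  · exact notPd0 _ (avec 2) (fun x => ⟨-(x 0), by
      rw [hbr_eq]; simp [avec, Pi.single_apply]⟩)
  · exact notPd0 _ (avec 2) (fun x => ⟨0, by
      rw [hbr_eq]; simp [avec, Pi.single_apply]⟩)
  · exact notPd0 _ (avec 5) (fun x => ⟨x 4, by
      rw [hbr_eq]; simp [avec, Pi.single_apply]⟩)
  · exact notPd0 _ (avec 5) (fun x => ⟨-(x 3), by
      rw [hbr_eq]; simp [avec, Pi.single_apply]⟩)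
  · exact notPd0 _ (avec 2) (fun x => ⟨0, by
      rw [hbr_eq]; simp [avec, Pi.single_apply]⟩)

lemma indep_pair {u v : Fin 6 → ℝ} (i0 i1 : Fin 6)
    (h1 : u i0 ≠ 0) (h2 : v i0 = 0) (h3 : v i1 ≠ 0) :
    LinearIndependent ℝ ![u, v] := by
  rw [LinearIndependent.pair_iff]
  intro s t hst
  have e0 := congrFun hst i0
  have e1 := congrFun hst i1
  simp only [Pi.add_apply, Pi.smul_apply, smul_eq_mul, Pi.zero_apply, h2, mul_zero,
    add_zero] at e0 e1
  have hs : s = 0 := by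
    rcases mul_eq_zero.mp e0 with h | h
    · exact h
    · exact absurd h h1
  subst hs
  simp only [zero_mul, zero_add] at e1
  have ht : t = 0 := by
    rcases mul_eq_zero.mp e1 with h | h
    · exact h
    · exact absurd h h3
  exact ⟨rfl, ht⟩

lemma Pd0_bvec_lt (j : Fin 6) (hj : (j : ℕ) < 4) : Pd0 (bvec j) := by
  fin_cases j
  · refine ⟨avec 1, avec 4, ?_⟩
    rw [hbr_eq, hbr_eq]
    apply indep_pair 2 5 <;>
      simp [avec, bvec, Pi.single_apply, Pi.add_apply, Pi.sub_apply]
  · refine ⟨avec 1, avec 4, ?_⟩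
    rw [hbr_eq, hbr_eq]
    apply indep_pair 2 5 <;>
      simp [avec, bvec, Pi.single_apply, Pi.add_apply, Pi.sub_apply]
  · refine ⟨avec 0, avec 3, ?_⟩
    rw [hbr_eq, hbr_eq]
    apply indep_pair 2 5 <;>
      simp [avec, bvec, Pi.single_apply, Pi.add_apply, Pi.sub_apply]
  · refine ⟨avec 0, avec 3, ?_⟩
    rw [hbr_eq, hbr_eq]
    apply indep_pair 2 5 <;>
      simp [avec, bvec, Pi.single_apply, Pi.add_apply, Pi.sub_apply]
  · simp at hj
  · simp at hj

lemma notPd0_bvec_ge (j : Fin 6) (hj : 4 ≤ (j : ℕ)) : ¬ Pd0 (bvec j) := by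
  fin_cases j
  · simp at hj
  · simp at hj
  · simp at hj
  · simp at hj
  · exact notPd0 _ (avec 2) (fun x => ⟨0, by
      rw [hbr_eq]; simp [avec, bvec, Pi.single_apply, Pi.add_apply, Pi.sub_apply]⟩)
  · exact notPd0 _ (avec 2) (fun x => ⟨0, by
      rw [hbr_eq]; simp [avec, bvec, Pi.single_apply, Pi.add_apply, Pi.sub_apply]⟩)

lemma Pd_BM (m : ℕ) (p : Fin n) (j : Fin 6) :
    Pd (BM n m (p, j)) ↔ (m ≤ (p : ℕ) ∧ (j : ℕ) < 4) := by
  rw [BM_apply, Pd_emb_iff]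
  by_cases hm : (p : ℕ) < m
  · simp only [W, if_pos hm]
    constructor
    · intro h; exact absurd h (notPd0_avec j)
    · rintro ⟨h1, -⟩; omega
  · simp only [W, if_neg hm]
    constructor
    · intro h
      refine ⟨by omega, ?_⟩
      by_contra hj
      exact notPd0_bvec_ge j (by omega) h
    · rintro ⟨-, h2⟩
      exact Pd0_bvec_lt j h2
/-! ### Counting -/

def eFin (m : ℕ) (hm : m ≤ n) : {p : Fin n // m ≤ (p : ℕ)} ≃ Fin (n - m) where
  toFun x := ⟨(x.1 : ℕ) - m, by have := x.1.isLt; have := x.2; omega⟩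
  invFun q := ⟨⟨(q : ℕ) + m, by have := q.isLt; omega⟩, by simp⟩
  left_inv x := by
    ext
    have := x.2
    simp
    omega
  right_inv q := by
    ext
    simp

lemma count_BM (m : ℕ) (hm : m ≤ n) :
    Nat.card {x : Fin n × Fin 6 // Pd (BM n m x)} = (n - m) * 4 := by
  have h1 : ∀ x : Fin n × Fin 6, Pd (BM n m x) ↔ (m ≤ (x.1 : ℕ) ∧ (x.2 : ℕ) < 4) := by
    rintro ⟨p, j⟩; exact Pd_BM m p j
  rw [Nat.card_congr (Equiv.subtypeEquivRight h1)]
  rw [Nat.card_congr (Equiv.subtypeProdEquivProd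
    (p := fun p : Fin n => m ≤ (p : ℕ)) (q := fun j : Fin 6 => (j : ℕ) < 4))]
  rw [Nat.card_prod]
  have h2 : Nat.card {p : Fin n // m ≤ (p : ℕ)} = n - m := by
    rw [Nat.card_congr (eFin m hm)]
    simp
  have h3 : Nat.card {j : Fin 6 // (j : ℕ) < 4} = 4 := by
    rw [Nat.card_eq_fintype_card]
    decide
  rw [h2, h3]

lemma count_reindexed (m : ℕ) (hm : m ≤ n) (e : (Fin n × Fin 6) ≃ Fin (6 * n)) :
    Nat.card {i : Fin (6 * n) // Pd (((BM n m).reindex e) i)} = (n - m) * 4 := by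
  have h0 : Nat.card {i : Fin (6 * n) // Pd (((BM n m).reindex e) i)}
      = Nat.card {x : Fin n × Fin 6 // Pd (BM n m x)} := by
    refine Nat.card_congr (Equiv.subtypeEquiv e.symm fun i => ?_)
    rw [Module.Basis.reindex_apply]
  rw [h0, count_BM m hm]

end NB

end

/-- For every `n ≥ 1` there is a real nilpotent Lie algebra of dimension `6n` with at
least `n + 1` pairwise inequivalent nice bases. -/
theorem exists_nilpotent_with_many_nice_bases (n : ℕ) (hn : 0 < n) :
    ∃ (L : Type) (_ : LieRing L) (_ : LieAlgebra ℝ L),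
      LieRing.IsNilpotent L ∧ Module.finrank ℝ L = 6 * n ∧
      ∃ Bs : Fin (n + 1) → Module.Basis (Fin (6 * n)) ℝ L,
        (∀ m, IsNiceBasis (Bs m)) ∧
        ∀ m m', m ≠ m' → ¬ BasesEquivalent (Bs m) (Bs m') := by
  classical
  refine ⟨NB.LL n, inferInstance, inferInstance, NB.LL_nilpotent n, ?_, ?_⟩
  · rw [Module.finrank_eq_card_basis (NB.BM n 0)]
    simp [Fintype.card_prod]
    ring
  · have e : (Fin n × Fin 6) ≃ Fin (6 * n) := finProdFinEquiv.trans (finCongr (by ring))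
    refine ⟨fun m => (NB.BM n (m : ℕ)).reindex e, fun m => NB.nice_reindex _ _ (NB.nice_BM (m : ℕ)), ?_⟩
    intro m m' hne heq
    have hc := NB.count_eq_of_equivalent _ _ heq
    rw [NB.count_reindexed (m : ℕ) (by omega) e, NB.count_reindexed (m' : ℕ) (by omega) e] at hc
    have hm : (m : ℕ) < n + 1 := m.isLt
    have hm' : (m' : ℕ) < n + 1 := m'.isLt
    have hvne : (m : ℕ) ≠ (m' : ℕ) := fun h => hne (Fin.ext h)
    omega
end

section
/- Let M be an m×n integer matrix, and let the group G = (ℝ∖{0})^n act on the set V̊ = (ℝ∖{0})^m by (g·c)_a = (∏_{j=1}^n g_j^{M_{aj}}) · c_a. Choose subsets J₂ ⊆ J ⊆ {1,…,m} such that the rows of M indexed by J₂ form a maximal linearly independent family of rows of the mod-2 reduction of M over ℤ/2ℤ, and the rows of M indexed by J form a maximal linearly independent family of rows of M over ℝ. Let W̊ = { c ∈ V̊ : c_a = 1 for every a ∈ J₂, and c_a ∈ {1,−1} for every a ∈ J∖J₂ }. Then W̊ is a fundamental domain for the action: every G-orbit in V̊ intersects W̊ in exactly one point. -/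
open Finset

namespace NiceFD

noncomputable def sg (t : ZMod 2) : ℝ := if t = 0 then 1 else -1

lemma zmod2_cases : ∀ t : ZMod 2, t = 0 ∨ t = 1 := by decide

lemma sg_zero : sg 0 = 1 := by simp [sg]
lemma sg_one : sg 1 = -1 := by simp [sg]

lemma sg_ne_zero (t : ZMod 2) : sg t ≠ 0 := by
  rcases zmod2_cases t with h | h <;> simp [sg, h]

lemma sg_abs (t : ZMod 2) : |sg t| = 1 := by
  rcases zmod2_cases t with h | h <;> simp [sg, h]

lemma sg_eq_one_iff {t : ZMod 2} : sg t = 1 ↔ t = 0 := by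
  rcases zmod2_cases t with h | h <;> subst h <;> norm_num [sg]

lemma sg_add (s t : ZMod 2) : sg (s + t) = sg s * sg t := by
  rcases zmod2_cases s with hs | hs <;> rcases zmod2_cases t with ht | ht <;>
      subst hs <;> subst ht <;>
    simp only [add_zero, zero_add, show ((1:ZMod 2)+1) = 0 from by decide] <;>
    norm_num [sg]

lemma sg_sum {ι : Type*} (s : Finset ι) (f : ι → ZMod 2) :
    ∏ i ∈ s, sg (f i) = sg (∑ i ∈ s, f i) := by
  classical
  induction s using Finset.induction with
  | empty => simp [sg_zero]
  | insert _ _ h ih => rw [Finset.prod_insert h, Finset.sum_insert h, sg_add, ih]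

lemma sg_zpow (k : ℤ) (b : ZMod 2) : sg b ^ k = sg ((k : ZMod 2) * b) := by
  rcases zmod2_cases b with hb | hb
  · subst hb; simp [sg_zero]
  · subst hb
    rw [mul_one, sg_one]
    rcases Int.even_or_odd k with hk | hk
    · rw [hk.neg_one_zpow, eq_comm, sg_eq_one_iff,
        ZMod.intCast_zmod_eq_zero_iff_dvd]
      exact_mod_cast hk.two_dvd
    · rw [hk.neg_one_zpow]
      have : ((k : ZMod 2)) = 1 := by
        obtain ⟨l, rfl⟩ := hk
        push_cast
        rw [show ((2:ZMod 2)) = 0 from by decide]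
        ring
      rw [this, sg_one]

lemma exp_zpow (y : ℝ) (k : ℤ) : Real.exp y ^ k = Real.exp (k * y) := by
  rw [← Real.rpow_intCast, Real.rpow_def_of_pos (Real.exp_pos y), Real.log_exp, mul_comm]

noncomputable def bt (r : ℝ) : ZMod 2 := if 0 < r then 0 else 1

lemma decomp {r : ℝ} (hr : r ≠ 0) : r = sg (bt r) * Real.exp (Real.log |r|) := by
  rw [Real.exp_log (abs_pos.mpr hr)]
  rcases hr.lt_or_gt with h | h
  · simp [sg, bt, not_lt.mpr h.le, abs_of_neg h]
  · simp [sg, bt, h, abs_of_pos h]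

lemma bt_sg_exp (b : ZMod 2) (y : ℝ) : bt (sg b * Real.exp y) = b := by
  rcases zmod2_cases b with hb | hb <;> subst hb
  · simp [bt, sg_zero, Real.exp_pos]
  · have : sg 1 * Real.exp y < 0 := by
      rw [sg_one]; nlinarith [Real.exp_pos y]
    simp [bt, not_lt.mpr this.le]

lemma log_abs_sg_exp (b : ZMod 2) (y : ℝ) : Real.log |sg b * Real.exp y| = y := by
  rw [abs_mul, sg_abs, one_mul, abs_of_pos (Real.exp_pos y), Real.log_exp]

lemma prod_formula {n : ℕ} (g : Fin n → ℝ) (hg : ∀ j, g j ≠ 0) (k : Fin n → ℤ) :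
    ∏ j, g j ^ k j =
      sg (∑ j, (k j : ZMod 2) * bt (g j)) *
        Real.exp (∑ j, (k j : ℝ) * Real.log |g j|) := by
  rw [← sg_sum, Real.exp_sum, ← Finset.prod_mul_distrib]
  refine Finset.prod_congr rfl fun j _ => ?_
  rw [← sg_zpow, ← exp_zpow, ← mul_zpow, ← decomp (hg j)]

lemma surj_of_li {K : Type*} [Field K] {ι : Type*} [Fintype ι] {n : ℕ}
    (v : ι → Fin n → K) (hv : LinearIndependent K v) (t : ι → K) :
    ∃ x : Fin n → K, ∀ a, ∑ j, v a j * x j = t a := by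
  classical
  have hrank : (Matrix.of v).rank = Fintype.card ι := hv.rank_matrix
  have htop : LinearMap.range (Matrix.of v).mulVecLin = ⊤ := by
    apply Submodule.eq_top_of_finrank_eq
    rw [show Module.finrank K ↥(LinearMap.range (Matrix.of v).mulVecLin)
        = (Matrix.of v).rank from rfl, hrank, Module.finrank_pi]
  obtain ⟨x, hx⟩ := LinearMap.range_eq_top.mp htop t
  exact ⟨x, fun a => by
    simpa [Matrix.mulVecLin, Matrix.mulVec, dotProduct] using congrFun hx a⟩

lemma ker_extend {K : Type*} [Field K] {n : ℕ} {ι : Type*} {v : ι → Fin n → K}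
    {a : Fin n → K} (ha : a ∈ Submodule.span K (Set.range v)) (u : Fin n → K)
    (h0 : ∀ b, ∑ j, v b j * u j = 0) : ∑ j, a j * u j = 0 := by
  let φ : (Fin n → K) →ₗ[K] K :=
    { toFun := fun f => ∑ j, f j * u j
      map_add' := by intro f g; simp [add_mul, Finset.sum_add_distrib]
      map_smul' := by intro c f; simp [Finset.mul_sum, mul_assoc] }
  have : Submodule.span K (Set.range v) ≤ LinearMap.ker φ := by
    rw [Submodule.span_le]
    rintro _ ⟨b, rfl⟩
    exact h0 b
  exact this ha

lemma sign_cancel {r : ℝ} (hr : r ≠ 0) : sg (bt r) * (|r|⁻¹ * r) = 1 := by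
  rcases hr.lt_or_gt with h | h
  · rw [abs_of_neg h]
    have : sg (bt r) = -1 := by simp [bt, not_lt.mpr h.le, sg_one]
    rw [this]
    field_simp
  · rw [abs_of_pos h]
    have : sg (bt r) = 1 := by simp [bt, h, sg_zero]
    rw [this]
    field_simp

end NiceFD

open NiceFD in
/-- The set `W̊`, cut out by normalizing the coordinates indexed by `J₂` to `1` and those
indexed by `J \ J₂` to `±1`, is a fundamental domain for the action of the diagonal group
`(ℝ∖{0})ⁿ` on `(ℝ∖{0})ᵐ` through the root matrix `M`: each orbit meets it exactly once. -/
theorem fundamental_domain_diagonal_action (m n : ℕ) (M : Matrix (Fin m) (Fin n) ℤ)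
    (J₂ J : Finset (Fin m)) (hJJ : J₂ ⊆ J)
    (hindep₂ : LinearIndependent (ZMod 2)
      (fun a : J₂ => fun j : Fin n => (M a.1 j : ZMod 2)))
    (hspan₂ : ∀ a : Fin m, (fun j : Fin n => (M a j : ZMod 2)) ∈
      Submodule.span (ZMod 2)
        (Set.range fun b : J₂ => fun j : Fin n => (M b.1 j : ZMod 2)))
    (hindep : LinearIndependent ℝ
      (fun a : J => fun j : Fin n => (M a.1 j : ℝ)))
    (hspan : ∀ a : Fin m, (fun j : Fin n => (M a j : ℝ)) ∈
      Submodule.span ℝ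
        (Set.range fun b : J => fun j : Fin n => (M b.1 j : ℝ))) :
    ∀ c : Fin m → ℝ, (∀ a, c a ≠ 0) →
      ∃! w : Fin m → ℝ,
        ((∀ a, w a ≠ 0) ∧ (∀ a ∈ J₂, w a = 1) ∧
          (∀ a ∈ J, a ∉ J₂ → w a = 1 ∨ w a = -1)) ∧
        ∃ g : Fin n → ℝ, (∀ j, g j ≠ 0) ∧
          ∀ a, w a = (∏ j, g j ^ M a j) * c a := by
  classical
  intro c hc
  obtain ⟨x, hx⟩ := surj_of_li (fun a : J => fun j : Fin n => (M a.1 j : ℝ)) hindep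
    (fun a => - Real.log |c a.1|)
  obtain ⟨β, hβ⟩ := surj_of_li (fun a : J₂ => fun j : Fin n => (M a.1 j : ZMod 2)) hindep₂
    (fun a => bt (c a.1))
  have hg : ∀ j, (sg (β j) * Real.exp (x j)) ≠ 0 :=
    fun j => mul_ne_zero (sg_ne_zero _) (Real.exp_ne_zero _)
  have hgprod : ∀ a : Fin m, ∏ j, (sg (β j) * Real.exp (x j)) ^ M a j =
      sg (∑ j, (M a j : ZMod 2) * β j) * Real.exp (∑ j, (M a j : ℝ) * x j) := by
    intro a
    rw [prod_formula _ hg]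
    simp only [bt_sg_exp, log_abs_sg_exp]
  have hPne : ∀ a : Fin m, (∏ j, (sg (β j) * Real.exp (x j)) ^ M a j) ≠ 0 :=
    fun a => Finset.prod_ne_zero_iff.mpr fun j _ => zpow_ne_zero _ (hg j)
  have hA1 : ∀ a, ((∏ j, (sg (β j) * Real.exp (x j)) ^ M a j) * c a) ≠ 0 :=
    fun a => mul_ne_zero (hPne a) (hc a)
  have hA2 : ∀ a ∈ J₂, ((∏ j, (sg (β j) * Real.exp (x j)) ^ M a j) * c a) = 1 := by
    intro a ha
    have haJ : a ∈ J := hJJ ha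
    rw [hgprod a, hx ⟨a, haJ⟩, hβ ⟨a, ha⟩, Real.exp_neg,
      Real.exp_log (abs_pos.mpr (hc a)), mul_assoc]
    exact sign_cancel (hc a)
  have hAabs : ∀ a ∈ J, |(∏ j, (sg (β j) * Real.exp (x j)) ^ M a j) * c a| = 1 := by
    intro a haJ
    rw [hgprod a, hx ⟨a, haJ⟩, Real.exp_neg, Real.exp_log (abs_pos.mpr (hc a)),
      abs_mul, abs_mul, sg_abs, one_mul, abs_inv, abs_abs,
      inv_mul_cancel₀ (abs_ne_zero.mpr (hc a))]
  have hA3 : ∀ a ∈ J, a ∉ J₂ →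
      ((∏ j, (sg (β j) * Real.exp (x j)) ^ M a j) * c a) = 1 ∨
      ((∏ j, (sg (β j) * Real.exp (x j)) ^ M a j) * c a) = -1 :=
    fun a haJ _ => (abs_eq zero_le_one).mp (hAabs a haJ)
  refine ⟨fun a => (∏ j, (sg (β j) * Real.exp (x j)) ^ M a j) * c a,
    ⟨⟨hA1, hA2, hA3⟩, fun j => sg (β j) * Real.exp (x j), hg, fun a => rfl⟩, ?_⟩
  rintro w' ⟨⟨hw'0, hw'J₂, hw'J⟩, g', hg', hw'g⟩
  have hh : ∀ j, (g' j / (sg (β j) * Real.exp (x j))) ≠ 0 :=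
    fun j => div_ne_zero (hg' j) (hg j)
  have hrel : ∀ a, w' a = (∏ j, (g' j / (sg (β j) * Real.exp (x j))) ^ M a j) *
      ((∏ j, (sg (β j) * Real.exp (x j)) ^ M a j) * c a) := by
    intro a
    have hq : ∏ j, (g' j / (sg (β j) * Real.exp (x j))) ^ M a j =
        (∏ j, g' j ^ M a j) / (∏ j, (sg (β j) * Real.exp (x j)) ^ M a j) := by
      rw [← Finset.prod_div_distrib]
      exact Finset.prod_congr rfl fun j _ => div_zpow _ _ _
    rw [hq, hw'g a, div_mul_eq_mul_div, mul_left_comm,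
      mul_div_cancel_left₀ _ (hPne a)]
  have hdec : ∀ a : Fin m, ∏ j, (g' j / (sg (β j) * Real.exp (x j))) ^ M a j =
      sg (∑ j, (M a j : ZMod 2) * bt (g' j / (sg (β j) * Real.exp (x j)))) *
        Real.exp (∑ j, (M a j : ℝ) * Real.log |g' j / (sg (β j) * Real.exp (x j))|) :=
    fun a => prod_formula _ hh (M a)
  have hw'abs : ∀ a ∈ J, |w' a| = 1 := by
    intro a haJ
    by_cases h2 : a ∈ J₂
    · rw [hw'J₂ a h2]; exact abs_one
    · rcases hw'J a haJ h2 with h | h <;> rw [h] <;> norm_num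
  have hSJ : ∀ b : J, ∑ j, (M b.1 j : ℝ) *
      Real.log |g' j / (sg (β j) * Real.exp (x j))| = 0 := by
    intro b
    have h1 := congrArg abs (hrel b.1)
    rw [hdec b.1, abs_mul, abs_mul, sg_abs, one_mul, abs_of_pos (Real.exp_pos _),
      hAabs b.1 b.2, mul_one, hw'abs b.1 b.2] at h1
    have := h1.symm
    rwa [Real.exp_eq_one_iff] at this
  have hSall : ∀ a : Fin m, ∑ j, (M a j : ℝ) *
      Real.log |g' j / (sg (β j) * Real.exp (x j))| = 0 :=
    fun a => ker_extend (hspan a) _ (fun b => hSJ b)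
  have hS2J : ∀ b : J₂, ∑ j, (M b.1 j : ZMod 2) *
      bt (g' j / (sg (β j) * Real.exp (x j))) = 0 := by
    intro b
    have h1 := hrel b.1
    rw [hdec b.1, hSall b.1, Real.exp_zero, mul_one, hA2 b.1 b.2, mul_one,
      hw'J₂ b.1 b.2] at h1
    exact sg_eq_one_iff.mp h1.symm
  have hS2all : ∀ a : Fin m, ∑ j, (M a j : ZMod 2) *
      bt (g' j / (sg (β j) * Real.exp (x j))) = 0 :=
    fun a => ker_extend (hspan₂ a) _ (fun b => hS2J b)
  funext a
  have h1 := hrel a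
  rw [hdec a, hSall a, hS2all a, Real.exp_zero, sg_zero, one_mul, one_mul] at h1
  exact h1
end

section
/- Let 𝔤 be a real nilpotent Lie algebra with a nice basis (e_1,…,e_n). Let g = (g_1,…,g_n) and h = (h_1,…,h_n) be tuples of nonzero real numbers with sign(g_i) = sign(h_i) for every i, and suppose that g_k/(g_i g_j) = h _k/(h_i h_j) whenever [e_i,e_j] is a nonzero multiple of e_k. Then there is a Lie algebra automorphism φ of 𝔤 (which can be taken diagonal with positive entries in the basis) such that the diagonal metrics ⟨·,·⟩_g = Σ_i g_i e^i⊗e^i and ⟨·,·⟩_h = Σ_i h_i e^i⊗e^i satisfy ⟨φ(x), φ(y)⟩_h = ⟨x, y⟩_g for all x, y ∈ 𝔤; in particular the two metric Lie algebras are isometric. -/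
/-- If two tuples of nonzero diagonal coefficients have the same signs and give the same
value `g_k/(g_i g_j)` on every nonzero bracket, then the corresponding diagonal metrics
are related by a Lie algebra automorphism which is diagonal with positive entries;
in particular they are isometric. -/
theorem diagonal_metrics_isometric {L : Type} [LieRing L] [LieAlgebra ℝ L]
    [LieRing.IsNilpotent L] {n : ℕ}
    (e : Module.Basis (Fin n) ℝ L) (he : IsNiceBasis e)
    (g h : Fin n → ℝ) (hg : ∀ i, g i ≠ 0) (hh : ∀ i, h i ≠ 0)
    (hsign : ∀ i, Real.sign (g i) = Real.sign (h i))
    (hratio : ∀ i j k : Fin n, (∃ a : ℝ, a ≠ 0 ∧ ⁅e i, e j⁆ = a • e k) →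
      g k / (g i * g j) = h k / (h i * h j)) :
    ∃ φ : L ≃ₗ⁅ℝ⁆ L,
      (∀ i, ∃ d : ℝ, 0 < d ∧ φ (e i) = d • e i) ∧
      ∀ x y : L, (∑ i, h i * e.repr (φ x) i * e.repr (φ y) i) =
        ∑ i, g i * e.repr x i * e.repr y i := by
  classical
  set d : Fin n → ℝ := fun i => Real.sqrt (g i / h i) with hd
  have hpos : ∀ i, 0 < g i / h i := by
    intro i
    rcases lt_or_gt_of_ne (hg i) with hgi | hgi <;>
      rcases lt_or_gt_of_ne (hh i) with hhi | hhi
    · exact div_pos_of_neg_of_neg hgi hhi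
    · exfalso; have := hsign i
      rw [Real.sign_of_neg hgi, Real.sign_of_pos hhi] at this; norm_num at this
    · exfalso; have := hsign i
      rw [Real.sign_of_pos hgi, Real.sign_of_neg hhi] at this; norm_num at this
    · exact div_pos hgi hhi
  have hdpos : ∀ i, 0 < d i := fun i => Real.sqrt_pos.mpr (hpos i)
  have hdsq : ∀ i, d i * d i = g i / h i := fun i => Real.mul_self_sqrt (hpos i).le
  have hmul : ∀ i, h i * (d i * d i) = g i := by
    intro i; rw [hdsq, mul_comm]; exact div_mul_cancel₀ _ (hh i)
  have hdd : ∀ i j k (a : ℝ), a ≠ 0 → ⁅e i, e j⁆ = a • e k → d k = d i * d j := by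
    intro i j k a ha hb
    have h1 := hratio i j k ⟨a, ha, hb⟩
    rw [div_eq_div_iff (mul_ne_zero (hg i) (hg j)) (mul_ne_zero (hh i) (hh j))] at h1
    have h2 : g k / h k = (g i / h i) * (g j / h j) := by
      rw [div_mul_div_comm, div_eq_div_iff (hh k) (mul_ne_zero (hh i) (hh j))]
      linear_combination h1
    simp only [hd]
    rw [h2, Real.sqrt_mul (hpos i).le]
  set f : L →ₗ[ℝ] L := e.constr ℝ fun i => d i • e i with hf
  set fi : L →ₗ[ℝ] L := e.constr ℝ fun i => (d i)⁻¹ • e i with hfi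
  have hfe : ∀ i, f (e i) = d i • e i := fun i => e.constr_basis ℝ _ i
  have hfie : ∀ i, fi (e i) = (d i)⁻¹ • e i := fun i => e.constr_basis ℝ _ i
  have hcomp1 : f.comp fi = LinearMap.id := by
    apply e.ext; intro i
    simp [hfie, map_smul, hfe, smul_smul, inv_mul_cancel₀ (hdpos i).ne']
  have hcomp2 : fi.comp f = LinearMap.id := by
    apply e.ext; intro i
    simp [hfe, map_smul, hfie, smul_smul, mul_inv_cancel₀ (hdpos i).ne']
  have key0 : ∀ i j, f ⁅e i, e j⁆ = ⁅f (e i), f (e j)⁆ := by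
    intro i j
    obtain ⟨k, a, hk⟩ := he.1 i j
    rcases eq_or_ne a 0 with rfl | ha
    · simp [hk, hfe, smul_lie, lie_smul]
    · rw [hk, map_smul, hfe, hfe, hfe, smul_lie, lie_smul, hk,
        hdd i j k a ha hk, smul_smul, smul_smul, smul_smul]
      congr 1; ring
  have hls : ∀ (x : L) (v : Fin n → L), ⁅x, ∑ i, v i⁆ = ∑ i, ⁅x, v i⁆ := by
    intro x v
    exact map_sum (LieAlgebra.ad ℝ L x) v Finset.univ
  have hsl : ∀ (y : L) (v : Fin n → L), ⁅∑ i, v i, y⁆ = ∑ i, ⁅v i, y⁆ := by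
    intro y v
    rw [← lie_skew, hls, ← Finset.sum_neg_distrib]
    exact Finset.sum_congr rfl fun i _ => lie_skew _ _
  have key : ∀ x y : L, f ⁅x, y⁆ = ⁅f x, f y⁆ := by
    intro x y
    conv_lhs => rw [← Module.Basis.sum_repr e x, ← Module.Basis.sum_repr e y]
    conv_rhs => rw [← Module.Basis.sum_repr e x, ← Module.Basis.sum_repr e y]
    simp only [map_sum, map_smul, hsl, hls, smul_lie, lie_smul, key0]
  let φ : L ≃ₗ⁅ℝ⁆ L :=
    { toLinearMap := f
      map_lie' := fun {x y} => key x y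
      invFun := fi
      left_inv := fun x => by
        have := LinearMap.congr_fun hcomp2 x; simpa using this
      right_inv := fun x => by
        have := LinearMap.congr_fun hcomp1 x; simpa using this }
  have hφ : ∀ x : L, φ x = f x := fun x => rfl
  have hrepr : ∀ (x : L) i, e.repr (f x) i = d i * e.repr x i := by
    intro x i
    conv_lhs => rw [← Module.Basis.sum_repr e x]
    simp only [map_sum, map_smul, hfe, Module.Basis.repr_self, Finsupp.smul_single, smul_eq_mul]
    rw [Finsupp.finset_sum_apply]
    simp only [Finsupp.single_apply]
    rw [Finset.sum_ite_eq' Finset.univ i]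
    simp [mul_comm]
  refine ⟨φ, fun i => ⟨d i, hdpos i, by rw [hφ, hfe]⟩, fun x y => ?_⟩
  simp only [hφ, hrepr]
  refine Finset.sum_congr rfl fun i _ => ?_
  rw [← hmul i]; ring
end

section
/- Let 𝔤 be a nonabelian real Lie algebra with a nice basis (e_1,…,e_n), and let s be an involution of {1,…,n} with no fixed points such that whenever [e_i,e_j] is a nonzero multiple of e_k, the bracket [e_{s(i)},e_{s(j)}] is a nonzero multiple of e_{s(k)}. Let V₊ be the span of the vectors e_i + e_{s(i)} (1 ≤ i ≤ n) and V₋ the span of the vectors e_i − e_{s(i)} (1 ≤ i ≤ n). Then V₊ and V₋ are not both Lie subalgebras of 𝔤. -/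
private lemma aux_plus {L : Type} [LieRing L] [LieAlgebra ℝ L] {n : ℕ} (e : Module.Basis (Fin n) ℝ L)
    (s : Fin n → Fin n) (hs : Function.Involutive s) :
    ∀ v ∈ Submodule.span ℝ (Set.range fun i => e i + e (s i)),
      ∀ k, e.repr v (s k) = e.repr v k := by
  intro v hv
  induction hv using Submodule.span_induction with
  | mem x hx =>
    obtain ⟨i, rfl⟩ := hx
    intro k
    have h1 : (i = s k) ↔ (s i = k) := by
      constructor
      · intro h; rw [h, hs]
      · intro h; rw [← h, hs]
    have h2 : (s i = s k) ↔ (i = k) := hs.injective.eq_iff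
    simp only [map_add, Module.Basis.repr_self, Finsupp.coe_add, Pi.add_apply,
      Finsupp.single_apply, h1, h2]
    ring
  | zero => simp
  | add x y _ _ hx hy => intro k; simp [hx k, hy k]
  | smul c x _ hx => intro k; simp [hx k]

private lemma aux_minus {L : Type} [LieRing L] [LieAlgebra ℝ L] {n : ℕ} (e : Module.Basis (Fin n) ℝ L)
    (s : Fin n → Fin n) (hs : Function.Involutive s) :
    ∀ v ∈ Submodule.span ℝ (Set.range fun i => e i - e (s i)),
      ∀ k, e.repr v (s k) = - e.repr v k := by
  intro v hv
  induction hv using Submodule.span_induction with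
  | mem x hx =>
    obtain ⟨i, rfl⟩ := hx
    intro k
    have h1 : (i = s k) ↔ (s i = k) := by
      constructor
      · intro h; rw [h, hs]
      · intro h; rw [← h, hs]
    have h2 : (s i = s k) ↔ (i = k) := hs.injective.eq_iff
    simp only [map_sub, Module.Basis.repr_self, Finsupp.coe_sub, Pi.sub_apply,
      Finsupp.single_apply, h1, h2]
    ring
  | zero => simp
  | add x y _ _ hx hy => intro k; simp [hx k, hy k]; ring
  | smul c x _ hx => intro k; simp [hx k]

/-- For a fixed-point-free diagram involution `s` of a nonabelian nice Lie algebra, the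
`+1` and `−1` eigenspaces of the induced involution are not both Lie subalgebras:
the associated almost paracomplex structure is not integrable. -/
theorem eigenspaces_not_both_subalgebras {L : Type} [LieRing L] [LieAlgebra ℝ L]
    (hnonab : ∃ x y : L, ⁅x, y⁆ ≠ 0) {n : ℕ}
    (e : Module.Basis (Fin n) ℝ L) (he : IsNiceBasis e)
    (s : Fin n → Fin n) (hs : Function.Involutive s) (hsfix : ∀ i, s i ≠ i)
    (hdi : ∀ (i j k : Fin n) (a : ℝ), a ≠ 0 → ⁅e i, e j⁆ = a • e k →
      ∃ b : ℝ, b ≠ 0 ∧ ⁅e (s i), e (s j)⁆ = b • e (s k)) :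
    ¬ ((∀ x ∈ Submodule.span ℝ (Set.range fun i => e i + e (s i)),
          ∀ y ∈ Submodule.span ℝ (Set.range fun i => e i + e (s i)),
            ⁅x, y⁆ ∈ Submodule.span ℝ (Set.range fun i => e i + e (s i))) ∧
        (∀ x ∈ Submodule.span ℝ (Set.range fun i => e i - e (s i)),
          ∀ y ∈ Submodule.span ℝ (Set.range fun i => e i - e (s i)),
            ⁅x, y⁆ ∈ Submodule.span ℝ (Set.range fun i => e i - e (s i)))) := by
  rintro ⟨hP, hM⟩
  -- find a nonzero basis bracket
  have hexists : ∃ i j : Fin n, ⁅e i, e j⁆ ≠ 0 := by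
    by_contra h
    push_neg at h
    obtain ⟨x, y, hxy⟩ := hnonab
    apply hxy
    have L1 : ∀ (g : Fin n → ℝ) (z : L), ⁅∑ i, g i • e i, z⁆ = ∑ i, g i • ⁅e i, z⁆ := by
      intro g z
      simp only [sum_lie, smul_lie]
    have L2 : ∀ (g : Fin n → ℝ) (z : L), ⁅z, ∑ i, g i • e i⁆ = ∑ i, g i • ⁅z, e i⁆ := by
      intro g z
      rw [show ⁅z, ∑ i, g i • e i⁆ = LieAlgebra.ad ℝ L z (∑ i, g i • e i) from
        (LieAlgebra.ad_apply ℝ L z (∑ i, g i • e i)).symm, map_sum]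
      simp [LieAlgebra.ad_apply]
    rw [← e.sum_repr x, ← e.sum_repr y, L1]
    simp only [L2, h, smul_zero, Finset.sum_const_zero]
  obtain ⟨i, j, hij⟩ := hexists
  obtain ⟨k, a, hk⟩ := he.1 i j
  have ha : a ≠ 0 := by rintro rfl; simp [hk] at hij
  obtain ⟨b, hb, hbk⟩ := hdi i j k a ha hk
  have rk : ∀ (c : ℝ) (m k' : Fin n), e.repr (c • e m) k' = if m = k' then c else 0 := by
    intro c m k'; simp [Finsupp.single_apply]
  have hsk : s k ≠ k := hsfix k
  -- repr values of the two known brackets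
  have hak : e.repr ⁅e i, e j⁆ k = a := by rw [hk, rk]; exact if_pos rfl
  have hask : e.repr ⁅e i, e j⁆ (s k) = 0 := by
    rw [hk, rk]; exact if_neg fun h => hsk h.symm
  have hbk' : e.repr ⁅e (s i), e (s j)⁆ (s k) = b := by rw [hbk, rk]; exact if_pos rfl
  have hbkk : e.repr ⁅e (s i), e (s j)⁆ k = 0 := by rw [hbk, rk]; exact if_neg hsk
  -- cross terms vanish at k and s k
  have c1k : e.repr ⁅e i, e (s j)⁆ k = 0 := by
    by_contra h
    exact hsfix j (he.2 i k (s j) j h (hak ▸ ha))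
  have c1sk : e.repr ⁅e i, e (s j)⁆ (s k) = 0 := by
    have h1 : e.repr ⁅e (s j), e (s i)⁆ (s k) = -b := by
      rw [← lie_skew, map_neg, Finsupp.neg_apply, hbk']
    have h2 : e.repr ⁅e (s j), e i⁆ (s k) = 0 := by
      by_contra h
      exact hsfix i (he.2 (s j) (s k) (s i) i (by rw [h1]; simpa using hb) h)
    rw [← lie_skew, map_neg, Finsupp.neg_apply, h2, neg_zero]
  have c2k : e.repr ⁅e (s i), e j⁆ k = 0 := by
    have h1 : e.repr ⁅e j, e i⁆ k = -a := by rw [← lie_skew, map_neg, Finsupp.neg_apply, hak]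
    have h2 : e.repr ⁅e j, e (s i)⁆ k = 0 := by
      by_contra h
      exact hsfix i (he.2 j k (s i) i h (by rw [h1]; simpa using ha))
    rw [← lie_skew, map_neg, Finsupp.neg_apply, h2, neg_zero]
  have c2sk : e.repr ⁅e (s i), e j⁆ (s k) = 0 := by
    by_contra h
    exact hsfix j (he.2 (s i) (s k) (s j) j (hbk' ▸ hb) h)
  -- V₊ gives b = a
  have memP : ⁅e i + e (s i), e j + e (s j)⁆ ∈
      Submodule.span ℝ (Set.range fun i => e i + e (s i)) :=
    hP _ (Submodule.subset_span ⟨i, rfl⟩) _ (Submodule.subset_span ⟨j, rfl⟩)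
  have hPeq := aux_plus e s hs _ memP k
  have hexpP : ⁅e i + e (s i), e j + e (s j)⁆ =
      ⁅e i, e j⁆ + ⁅e i, e (s j)⁆ + ⁅e (s i), e j⁆ + ⁅e (s i), e (s j)⁆ := by
    simp [add_lie, lie_add]; abel
  rw [hexpP] at hPeq
  simp only [map_add, Finsupp.coe_add, Pi.add_apply, hak, hask, hbk', hbkk,
    c1k, c1sk, c2k, c2sk, add_zero, zero_add] at hPeq
  -- V₋ gives b = -a
  have memM : ⁅e i - e (s i), e j - e (s j)⁆ ∈
      Submodule.span ℝ (Set.range fun i => e i - e (s i)) :=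
    hM _ (Submodule.subset_span ⟨i, rfl⟩) _ (Submodule.subset_span ⟨j, rfl⟩)
  have hMeq := aux_minus e s hs _ memM k
  have hexpM : ⁅e i - e (s i), e j - e (s j)⁆ =
      ⁅e i, e j⁆ - ⁅e i, e (s j)⁆ - ⁅e (s i), e j⁆ + ⁅e (s i), e (s j)⁆ := by
    simp [sub_lie, lie_sub]; abel
  rw [hexpM] at hMeq
  simp only [map_add, map_sub, Finsupp.coe_add, Finsupp.coe_sub, Pi.add_apply,
    Pi.sub_apply, hak, hask, hbk', hbkk, c1k, c1sk, c2k, c2sk, add_zero,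
    zero_add, sub_zero, zero_sub, neg_zero] at hMeq
  -- contradiction: b = a and b = -a with a ≠ 0
  apply ha
  linarith [hPeq, hMeq]
end

section
/- Let 𝔤 be a nonabelian real nilpotent Lie algebra of nilpotency class 2 (that is, [[𝔤,𝔤],𝔤] = 0) admitting a nice basis (e_1,…,e_n), and let ⟨·,·⟩ be a metric on 𝔤 for which this basis is orthogonal. Then ⟨·,·⟩ is not ad-invariant: there exist x, y, z ∈ 𝔤 with ⟨[x,y],z⟩ + ⟨y,[x,z]⟩ ≠ 0. -/
/-- On a nonabelian 2-step nilpotent Lie algebra with a nice basis, no diagonal metric is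
ad-invariant. -/
theorem diagonal_metric_not_ad_invariant {L : Type} [LieRing L] [LieAlgebra ℝ L]
    (hnonab : ∃ x y : L, ⁅x, y⁆ ≠ 0)
    (h2step : ∀ x y z : L, ⁅⁅x, y⁆, z⁆ = 0) {n : ℕ}
    (e : Module.Basis (Fin n) ℝ L) (he : IsNiceBasis e)
    (B : LinearMap.BilinForm ℝ L)
    (hsymm : ∀ x y, B x y = B y x)
    (hnondeg : ∀ x, (∀ y, B x y = 0) → x = 0)
    (horth : ∀ i j : Fin n, i ≠ j → B (e i) (e j) = 0) :
    ∃ x y z : L, B ⁅x, y⁆ z + B y ⁅x, z⁆ ≠ 0 := by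
  by_contra hcon
  push_neg at hcon
  have hBdiag : ∀ j : Fin n, B (e j) (e j) ≠ 0 := by
    intro j h0
    have hz : e j = 0 := by
      apply hnondeg
      intro y
      rw [← e.sum_repr y, map_sum]
      refine Finset.sum_eq_zero fun m _ => ?_
      rw [map_smul]
      rcases eq_or_ne j m with rfl | hne
      · simp [h0]
      · simp [horth j m hne]
    exact e.ne_zero j hz
  have key : ∃ i j, ⁅e i, e j⁆ ≠ 0 := by
    by_contra hab
    push_neg at hab
    obtain ⟨x, y, hxy⟩ := hnonab
    apply hxy
    have hz : ∀ u v : L, ⁅u, v⁆ = LinearMap.mk₂ ℝ (fun a b : L => ⁅a, b⁆) add_lie smul_lie lie_add lie_smul u v := fun _ _ => rfl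
    rw [← e.sum_repr x, ← e.sum_repr y, hz, map_sum]
    refine Finset.sum_eq_zero fun m _ => ?_
    rw [map_smul]
    refine smul_eq_zero_of_right _ ?_
    rw [map_sum, LinearMap.sum_apply]
    refine Finset.sum_eq_zero fun i _ => ?_
    rw [map_smul, LinearMap.smul_apply]
    refine smul_eq_zero_of_right _ ?_
    rw [← hz]
    exact hab i m
  obtain ⟨i, j, hij⟩ := key
  obtain ⟨k, a, hk⟩ := he.1 i j
  have ha : a ≠ 0 := by
    intro h0
    exact hij (by rw [hk, h0, zero_smul])
  have hek : ∀ x : L, ⁅e k, x⁆ = 0 := by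
    intro x
    have h := h2step (e i) (e j) x
    rw [hk, smul_lie] at h
    exact (smul_eq_zero.mp h).resolve_left ha
  have hik : ⁅e i, e k⁆ = 0 := by
    rw [← lie_skew, hek, neg_zero]
  have h := hcon (e i) (e j) (e k)
  rw [hik, hk] at h
  simp only [map_smul, LinearMap.smul_apply, map_zero, add_zero, smul_eq_mul] at h
  exact hBdiag k ((mul_eq_zero.mp h).resolve_left ha)
end
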